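/- arXiv:1603.08147 — 7 statements merged into one kernel-verified Lean document; each statement's English description precedes it below -/
import Mathlib

section
/- Let S be a topological inverse semigroup and let a, c be 𝓓-equivalent elements of S. Then there exist b ∈ S with a 𝓡 b and b 𝓛 c, and elements s, s′, t, t′ ∈ S with as = b, bs′ = a, tb = c, t′c = b, such that the maps 𝔣_{a,c} : H_a → H_c : x ↦ txs and 𝔣_{c,a} : H_c → H_a : x ↦ t′xs′ are continuous and mutually inverse; hence the 𝓗-classes H_a and H_c are homeomorphic closed subspaces of S. -/
universe u v

/-- An inverse semigroup: every element has a unique (von Neumann) inverse. -/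
class InverseSemigroup (S : Type u) extends Semigroup S, Inv S where
  mul_inv_mul : ∀ a : S, a * a⁻¹ * a = a
  inv_mul_inv : ∀ a : S, a⁻¹ * a * a⁻¹ = a⁻¹
  inv_unique : ∀ a b : S, a * b * a = a → b * a * b = b → b = a⁻¹

section Green
variable {S : Type u} [Mul S]

/-- `b ∈ a·S¹`. -/
def rDvd (a b : S) : Prop := b = a ∨ ∃ s : S, a * s = b
/-- `b ∈ S¹·a`. -/
def lDvd (a b : S) : Prop := b = a ∨ ∃ s : S, s * a = b
/-- Green's relation 𝓡: `a 𝓡 b` iff `aS¹ = bS¹`. -/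
def greenR (a b : S) : Prop := rDvd a b ∧ rDvd b a
/-- Green's relation 𝓛: `a 𝓛 b` iff `S¹a = S¹b`. -/
def greenL (a b : S) : Prop := lDvd a b ∧ lDvd b a
/-- Green's relation 𝓗 = 𝓛 ∩ 𝓡. -/
def greenH (a b : S) : Prop := greenR a b ∧ greenL a b
/-- Green's relation 𝓓 = 𝓡∘𝓛 = 𝓛∘𝓡. -/
def greenD (a b : S) : Prop := ∃ c : S, greenR a c ∧ greenL c b
/-- The 𝓡-class of `a`. -/
def RClass (a : S) : Set S := {x | greenR a x}
/-- The 𝓛-class of `a`. -/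
def LClass (a : S) : Set S := {x | greenL a x}
/-- The 𝓗-class of `a`. -/
def HClass (a : S) : Set S := {x | greenH a x}

end Green

section Helpers
variable {S : Type u} [Semigroup S]

lemma rDvd_trans {a b c : S} (h1 : rDvd a b) (h2 : rDvd b c) : rDvd a c := by
  rcases h1 with rfl | ⟨s, rfl⟩
  · exact h2
  · rcases h2 with rfl | ⟨u, rfl⟩
    · exact Or.inr ⟨s, rfl⟩
    · exact Or.inr ⟨s * u, (mul_assoc ..).symm⟩

lemma lDvd_trans {a b c : S} (h1 : lDvd a b) (h2 : lDvd b c) : lDvd a c := by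
  rcases h1 with rfl | ⟨s, rfl⟩
  · exact h2
  · rcases h2 with rfl | ⟨u, rfl⟩
    · exact Or.inr ⟨s, rfl⟩
    · exact Or.inr ⟨u * s, mul_assoc ..⟩

lemma greenR_symm {a b : S} (h : greenR a b) : greenR b a := ⟨h.2, h.1⟩
lemma greenR_trans {a b c : S} (h1 : greenR a b) (h2 : greenR b c) : greenR a c :=
  ⟨rDvd_trans h1.1 h2.1, rDvd_trans h2.2 h1.2⟩
lemma greenL_symm {a b : S} (h : greenL a b) : greenL b a := ⟨h.2, h.1⟩
lemma greenL_trans {a b c : S} (h1 : greenL a b) (h2 : greenL b c) : greenL a c :=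
  ⟨lDvd_trans h1.1 h2.1, lDvd_trans h2.2 h1.2⟩

lemma rmul_lDvd {x y : S} (s : S) (h : lDvd x y) : lDvd (x * s) (y * s) := by
  rcases h with rfl | ⟨u, rfl⟩
  · exact Or.inl rfl
  · exact Or.inr ⟨u, (mul_assoc ..).symm⟩

lemma lmul_rDvd {x y : S} (t : S) (h : rDvd x y) : rDvd (t * x) (t * y) := by
  rcases h with rfl | ⟨u, rfl⟩
  · exact Or.inl rfl
  · exact Or.inr ⟨u, mul_assoc ..⟩

lemma stab_r {a b s s' : S} (h : a * s = b) (h' : b * s' = a) {x : S}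
    (hx : lDvd a x) : x * s * s' = x := by
  rcases hx with rfl | ⟨u, rfl⟩
  · rw [h, h']
  · rw [mul_assoc u a s, h, mul_assoc, h']

lemma stab_l {b c t t' : S} (h : t * b = c) (h' : t' * c = b) {x : S}
    (hx : rDvd b x) : t' * (t * x) = x := by
  rcases hx with rfl | ⟨v, rfl⟩
  · rw [h, h']
  · rw [← mul_assoc t b v, h, ← mul_assoc, h']

/-- Green's lemma, one direction: `x ↦ t x s` maps `H_a` into `H_c`, with inverse data. -/
lemma map_H {a b c s s' t t' : S} (hab : greenR a b) (hbc : greenL b c)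
    (hs : a * s = b) (hs' : b * s' = a) (ht : t * b = c) (ht' : t' * c = b)
    {x : S} (hx : greenH a x) :
    greenH c (t * x * s) ∧ t' * (t * x * s) * s' = x := by
  obtain ⟨hxR, hxL⟩ := hx
  have hxs : x * s * s' = x := stab_r hs hs' hxL.1
  have h2 : greenL b (x * s) := by
    constructor
    · have := rmul_lDvd s hxL.1; rwa [hs] at this
    · have := rmul_lDvd s hxL.2; rwa [hs] at this
  have h3 : greenR x (x * s) := ⟨Or.inr ⟨s, rfl⟩, Or.inr ⟨s', hxs⟩⟩
  have h4 : greenR b (x * s) := greenR_trans (greenR_symm hab) (greenR_trans hxR h3)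
  have ttxs : t' * (t * (x * s)) = x * s := stab_l ht ht' h4.1
  have h6 : greenL (x * s) (t * (x * s)) := ⟨Or.inr ⟨t, rfl⟩, Or.inr ⟨t', ttxs⟩⟩
  have h7 : greenR c (t * (x * s)) := by
    constructor
    · have := lmul_rDvd t h4.1; rwa [ht] at this
    · have := lmul_rDvd t h4.2; rwa [ht] at this
  have h8 : greenL c (t * (x * s)) :=
    greenL_trans (greenL_symm hbc) (greenL_trans h2 h6)
  constructor
  · rw [mul_assoc t x s]; exact ⟨h7, h8⟩
  · rw [mul_assoc t x s, ttxs, hxs]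

/-- Green's lemma, mirror direction. -/
lemma map_H' {a b c s s' t t' : S} (hab : greenR a b) (hbc : greenL b c)
    (hs : a * s = b) (hs' : b * s' = a) (ht : t * b = c) (ht' : t' * c = b)
    {x : S} (hx : greenH c x) :
    greenH a (t' * x * s') ∧ t * (t' * x * s') * s = x := by
  obtain ⟨hxR, hxL⟩ := hx
  have htx : t * (t' * x) = x := stab_l ht' ht hxR.1
  have h2 : greenR b (t' * x) := by
    constructor
    · have := lmul_rDvd t' hxR.1; rwa [ht'] at this
    · have := lmul_rDvd t' hxR.2; rwa [ht'] at this
  have h3 : greenL x (t' * x) := ⟨Or.inr ⟨t', rfl⟩, Or.inr ⟨t, htx⟩⟩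
  have h4 : greenL b (t' * x) := greenL_trans hbc (greenL_trans hxL h3)
  have hts : t' * x * s' * s = t' * x := stab_r hs' hs h4.1
  have h6 : greenR (t' * x) (t' * x * s') := ⟨Or.inr ⟨s', rfl⟩, Or.inr ⟨s, hts⟩⟩
  have h7 : greenL a (t' * x * s') := by
    constructor
    · have := rmul_lDvd s' h4.1; rwa [hs'] at this
    · have := rmul_lDvd s' h4.2; rwa [hs'] at this
  have h8 : greenR a (t' * x * s') :=
    greenR_trans hab (greenR_trans h2 h6)
  refine ⟨⟨h8, h7⟩, ?_⟩
  rw [mul_assoc t (t' * x * s') s, hts, htx]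

end Helpers

section InvHelpers
variable {S : Type u} [InverseSemigroup S]
open InverseSemigroup

lemma my_inv_inv (a : S) : (a⁻¹)⁻¹ = a :=
  (inv_unique a⁻¹ a (inv_mul_inv a) (mul_inv_mul a)).symm

lemma idem_inv {e : S} (he : e * e = e) : e⁻¹ = e :=
  (inv_unique e e (by rw [he, he]) (by rw [he, he])).symm

lemma idem_key {e f : S} (he : e * e = e) (hf : f * f = f) :
    f * (e * f)⁻¹ * e = (e * f)⁻¹ := by
  have h1 : e * f * (e * f)⁻¹ * (e * f) = e * f := mul_inv_mul (e * f)
  have h2 : (e * f)⁻¹ * (e * f) * (e * f)⁻¹ = (e * f)⁻¹ := inv_mul_inv (e * f)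
  refine inv_unique (e * f) (f * (e * f)⁻¹ * e) ?_ ?_
  · calc e * f * (f * (e * f)⁻¹ * e) * (e * f)
        = e * (f * f) * (e * f)⁻¹ * (e * e) * f := by simp only [mul_assoc]
      _ = e * f * (e * f)⁻¹ * (e * f) := by rw [hf, he, mul_assoc (e * f * (e * f)⁻¹) e f]
      _ = e * f := h1
  · calc f * (e * f)⁻¹ * e * (e * f) * (f * (e * f)⁻¹ * e)
        = f * ((e * f)⁻¹ * ((e * e) * ((f * f) * ((e * f)⁻¹ * e)))) := by
          simp only [mul_assoc]
      _ = f * ((e * f)⁻¹ * (e * f) * (e * f)⁻¹) * e := by rw [he, hf]; simp only [mul_assoc]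
      _ = f * (e * f)⁻¹ * e := by rw [h2, mul_assoc]

lemma idem_mul_idem {e f : S} (he : e * e = e) (hf : f * f = f) :
    (e * f) * (e * f) = e * f := by
  have key := idem_key he hf
  have h2 : (e * f)⁻¹ * (e * f) * (e * f)⁻¹ = (e * f)⁻¹ := inv_mul_inv (e * f)
  have hii : (e * f)⁻¹ * (e * f)⁻¹ = (e * f)⁻¹ := by
    calc (e * f)⁻¹ * (e * f)⁻¹
        = (f * (e * f)⁻¹ * e) * (f * (e * f)⁻¹ * e) := by rw [key]
      _ = f * ((e * f)⁻¹ * (e * f) * (e * f)⁻¹) * e := by simp only [mul_assoc]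
      _ = f * (e * f)⁻¹ * e := by rw [h2, mul_assoc]
      _ = (e * f)⁻¹ := key
  have : e * f = (e * f)⁻¹ := by
    conv_lhs => rw [← my_inv_inv (e * f), idem_inv hii]
  rw [this, hii]

lemma idem_comm {e f : S} (he : e * e = e) (hf : f * f = f) : e * f = f * e := by
  have hef := idem_mul_idem he hf
  have hfe := idem_mul_idem hf he
  have : f * e = (e * f)⁻¹ := by
    refine inv_unique (e * f) (f * e) ?_ ?_
    · calc e * f * (f * e) * (e * f)
          = e * (f * f) * (e * e) * f := by simp only [mul_assoc]
        _ = (e * f) * (e * f) := by rw [hf, he]; simp only [mul_assoc]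
        _ = e * f := hef
    · calc f * e * (e * f) * (f * e)
          = f * (e * e) * (f * f) * e := by simp only [mul_assoc]
        _ = (f * e) * (f * e) := by rw [he, hf]; simp only [mul_assoc]
        _ = f * e := hfe
  rw [this, idem_inv hef]

lemma mul_inv_idem (a : S) : (a * a⁻¹) * (a * a⁻¹) = a * a⁻¹ := by
  rw [mul_assoc, ← mul_assoc a⁻¹ a a⁻¹, inv_mul_inv]

lemma inv_mul_idem (a : S) : (a⁻¹ * a) * (a⁻¹ * a) = a⁻¹ * a := by
  rw [mul_assoc, ← mul_assoc a a⁻¹ a, mul_inv_mul]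

lemma greenR_idem (a : S) : greenR a (a * a⁻¹) :=
  ⟨Or.inr ⟨a⁻¹, rfl⟩, Or.inr ⟨a, mul_inv_mul a⟩⟩

lemma greenL_idem (a : S) : greenL a (a⁻¹ * a) :=
  ⟨Or.inr ⟨a⁻¹, rfl⟩, Or.inr ⟨a, by rw [← mul_assoc, mul_inv_mul]⟩⟩

lemma idem_eq_of_greenR {e f : S} (he : e * e = e) (hf : f * f = f)
    (h : greenR e f) : e = f := by
  have hef : e * f = f := by
    rcases h.1 with rfl | ⟨u, rfl⟩
    · exact he
    · rw [← mul_assoc, he]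
  have hfe : f * e = e := by
    rcases h.2 with rfl | ⟨u, rfl⟩
    · exact hf
    · rw [← mul_assoc, hf]
  calc e = f * e := hfe.symm
    _ = e * f := (idem_comm he hf).symm
    _ = f := hef

lemma idem_eq_of_greenL {e f : S} (he : e * e = e) (hf : f * f = f)
    (h : greenL e f) : e = f := by
  have hef : f * e = f := by
    rcases h.1 with rfl | ⟨u, rfl⟩
    · exact he
    · rw [mul_assoc, he]
  have hfe : e * f = e := by
    rcases h.2 with rfl | ⟨u, rfl⟩
    · exact hf
    · rw [mul_assoc, hf]
  calc e = e * f := hfe.symm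
    _ = f * e := idem_comm he hf
    _ = f := hef

lemma greenR_iff (a x : S) : greenR a x ↔ x * x⁻¹ = a * a⁻¹ := by
  constructor
  · intro h
    exact idem_eq_of_greenR (mul_inv_idem x) (mul_inv_idem a)
      (greenR_trans (greenR_symm (greenR_idem x))
        (greenR_trans (greenR_symm h) (greenR_idem a)))
  · intro h
    exact greenR_trans (greenR_idem a) (h ▸ greenR_symm (greenR_idem x))

lemma greenL_iff (a x : S) : greenL a x ↔ x⁻¹ * x = a⁻¹ * a := by
  constructor
  · intro h
    exact idem_eq_of_greenL (inv_mul_idem x) (inv_mul_idem a)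
      (greenL_trans (greenL_symm (greenL_idem x))
        (greenL_trans (greenL_symm h) (greenL_idem a)))
  · intro h
    exact greenL_trans (greenL_idem a) (h ▸ greenL_symm (greenL_idem x))

lemma rDvd_wit {a b : S} (h : rDvd a b) : ∃ s, a * s = b := by
  rcases h with h | hs
  · exact ⟨a⁻¹ * a, by rw [← mul_assoc, mul_inv_mul, h]⟩
  · exact hs

lemma lDvd_wit {a b : S} (h : lDvd a b) : ∃ s, s * a = b := by
  rcases h with h | hs
  · exact ⟨a * a⁻¹, by rw [mul_inv_mul, h]⟩
  · exact hs

lemma isClosed_HClass [TopologicalSpace S] [T2Space S] [ContinuousMul S]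
    [ContinuousInv S] (a : S) : IsClosed (HClass a) := by
  have : HClass a = {x : S | x * x⁻¹ = a * a⁻¹} ∩ {x : S | x⁻¹ * x = a⁻¹ * a} := by
    ext x
    exact and_congr (greenR_iff a x) (greenL_iff a x)
  rw [this]
  exact (isClosed_eq (continuous_id.mul continuous_inv) continuous_const).inter
    (isClosed_eq (continuous_inv.mul continuous_id) continuous_const)

end InvHelpers

/-- For 𝓓-equivalent elements `a, c` of a topological inverse semigroup there are `b, s, s′,
t, t′` with `a 𝓡 b`, `b 𝓛 c`, `as = b`, `bs′ = a`, `tb = c`, `t′c = b`, such that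
`x ↦ txs : H_a → H_c` and `x ↦ t′xs′ : H_c → H_a` are continuous and mutually inverse;
hence `H_a` and `H_c` are homeomorphic closed subspaces of `S`. -/
theorem statement_1 {S : Type u} [InverseSemigroup S] [TopologicalSpace S] [T2Space S]
    [ContinuousMul S] [ContinuousInv S] (a c : S) (hac : greenD a c) :
    ∃ b s s' t t' : S,
      greenR a b ∧ greenL b c ∧
      a * s = b ∧ b * s' = a ∧ t * b = c ∧ t' * c = b ∧
      Set.MapsTo (fun x => t * x * s) (HClass a) (HClass c) ∧
      Set.MapsTo (fun x => t' * x * s') (HClass c) (HClass a) ∧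
      (∀ x ∈ HClass a, t' * (t * x * s) * s' = x) ∧
      (∀ x ∈ HClass c, t * (t' * x * s') * s = x) ∧
      ContinuousOn (fun x => t * x * s) (HClass a) ∧
      ContinuousOn (fun x => t' * x * s') (HClass c) ∧
      IsClosed (HClass a) ∧ IsClosed (HClass c) := by
  obtain ⟨b, hab, hbc⟩ := hac
  obtain ⟨s, hs⟩ := rDvd_wit hab.1
  obtain ⟨s', hs'⟩ := rDvd_wit hab.2
  obtain ⟨t, ht⟩ := lDvd_wit hbc.1
  obtain ⟨t', ht'⟩ := lDvd_wit hbc.2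
  refine ⟨b, s, s', t, t', hab, hbc, hs, hs', ht, ht',
    fun x hx => (map_H hab hbc hs hs' ht ht' hx).1,
    fun x hx => (map_H' hab hbc hs hs' ht ht' hx).1,
    fun x hx => (map_H hab hbc hs hs' ht ht' hx).2,
    fun x hx => (map_H' hab hbc hs hs' ht ht' hx).2,
    (((continuous_const.mul continuous_id).mul continuous_const).continuousOn),
    (((continuous_const.mul continuous_id).mul continuous_const).continuousOn),
    isClosed_HClass a, isClosed_HClass c⟩
end

section
/- Let T and S be topological inverse semigroups such that S is an inverse subsemigroup of T (with the subspace topology). Let G be an 𝓗-class of S which is a closed subset of T, and let D_G be the 𝓓-class of S containing G. Then every 𝓗-class H of S with H ⊆ D_G is a closed subset of the topological space T. -/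
universe u v

section GreenIn
variable {S : Type u} [Mul S]

/-- `b ∈ a·P¹`, divisibility inside the subsemigroup `P`. -/
def rDvdIn (P : Set S) (a b : S) : Prop := b = a ∨ ∃ s ∈ P, a * s = b
/-- `b ∈ P¹·a`. -/
def lDvdIn (P : Set S) (a b : S) : Prop := b = a ∨ ∃ s ∈ P, s * a = b
/-- Green's relation 𝓡 of the subsemigroup `P`. -/
def greenRIn (P : Set S) (a b : S) : Prop := rDvdIn P a b ∧ rDvdIn P b a
/-- Green's relation 𝓛 of the subsemigroup `P`. -/
def greenLIn (P : Set S) (a b : S) : Prop := lDvdIn P a b ∧ lDvdIn P b a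
/-- Green's relation 𝓗 of the subsemigroup `P`. -/
def greenHIn (P : Set S) (a b : S) : Prop := greenRIn P a b ∧ greenLIn P a b
/-- Green's relation 𝓓 of the subsemigroup `P`. -/
def greenDIn (P : Set S) (a b : S) : Prop := ∃ c ∈ P, greenRIn P a c ∧ greenLIn P c b
/-- The 𝓗-class of `a` in the subsemigroup `P`. -/
def HClassIn (P : Set S) (a : S) : Set S := {x ∈ P | greenHIn P a x}
/-- The 𝓓-class of `a` in the subsemigroup `P`. -/
def DClassIn (P : Set S) (a : S) : Set S := {x ∈ P | greenDIn P a x}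

end GreenIn


section Aux
variable {T : Type u} [InverseSemigroup T] {P : Set T}

lemma rDvd_ex (hmul : ∀ a ∈ P, ∀ b ∈ P, a * b ∈ P) (hinv : ∀ a ∈ P, a⁻¹ ∈ P)
    {a b : T} (ha : a ∈ P) (h : rDvdIn P a b) : ∃ s ∈ P, a * s = b := by
  rcases h with h | h
  · exact ⟨a⁻¹ * a, hmul _ (hinv a ha) _ ha,
      by rw [h, ← mul_assoc, InverseSemigroup.mul_inv_mul]⟩
  · exact h

lemma lDvd_ex (hmul : ∀ a ∈ P, ∀ b ∈ P, a * b ∈ P) (hinv : ∀ a ∈ P, a⁻¹ ∈ P)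
    {a b : T} (ha : a ∈ P) (h : lDvdIn P a b) : ∃ s ∈ P, s * a = b := by
  rcases h with h | h
  · exact ⟨a * a⁻¹, hmul _ ha _ (hinv a ha),
      by rw [h]; exact InverseSemigroup.mul_inv_mul a⟩
  · exact h

end Aux

/-- Let `T` be a topological inverse semigroup and `P ⊆ T` an inverse subsemigroup (the
semigroup `S`, carrying the subspace topology). If the 𝓗-class (in `S`) of an element
`a ∈ P` is closed in `T`, then every 𝓗-class of `S` contained in the 𝓓-class of `a`
is closed in `T`. -/
theorem statement_4 {T : Type u} [InverseSemigroup T] [TopologicalSpace T] [T2Space T]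
    [ContinuousMul T] [ContinuousInv T] (P : Set T)
    (hmul : ∀ a ∈ P, ∀ b ∈ P, a * b ∈ P) (hinv : ∀ a ∈ P, a⁻¹ ∈ P)
    (a : T) (ha : a ∈ P) (hG : IsClosed (HClassIn P a))
    (b : T) (hb : b ∈ P) (hH : HClassIn P b ⊆ DClassIn P a) :
    IsClosed (HClassIn P b) := by
  -- `b` lies in its own 𝓗-class, hence in the 𝓓-class of `a`.
  have hbH : b ∈ HClassIn P b :=
    ⟨hb, ⟨⟨Or.inl rfl, Or.inl rfl⟩, ⟨Or.inl rfl, Or.inl rfl⟩⟩⟩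
  obtain ⟨-, c, hc, ⟨hac1, hac2⟩, ⟨hcb1, hcb2⟩⟩ := hH hbH
  obtain ⟨s, hs, hsc⟩ := rDvd_ex hmul hinv ha hac1     -- a * s = c
  obtain ⟨s', hs', hs'a⟩ := rDvd_ex hmul hinv hc hac2  -- c * s' = a
  obtain ⟨t, ht, htb⟩ := lDvd_ex hmul hinv hc hcb1     -- t * c = b
  obtain ⟨t', ht', ht'c⟩ := lDvd_ex hmul hinv hb hcb2  -- t' * b = c
  have hA : ∀ z, c * (s' * z) = a * z := fun z => by rw [← mul_assoc, hs'a]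
  have hA' : ∀ z, a * (s * z) = c * z := fun z => by rw [← mul_assoc, hsc]
  have hB : ∀ z, t * (c * z) = b * z := fun z => by rw [← mul_assoc, htb]
  have hB' : ∀ z, t' * (b * z) = c * z := fun z => by rw [← mul_assoc, ht'c]
  set C : Set T :=
    {x | t' * (x * s') ∈ HClassIn P a ∧ t * (t' * (x * (s' * s))) = x} with hC
  have hCclosed : IsClosed C := by
    have h1 : IsClosed {x : T | t' * (x * s') ∈ HClassIn P a} :=
      hG.preimage (by fun_prop)
    have h2 : IsClosed {x : T | t * (t' * (x * (s' * s))) = x} :=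
      isClosed_eq (by fun_prop) continuous_id
    exact h1.inter h2
  have hEq : HClassIn P b = C := by
    ext x
    constructor
    · rintro ⟨hxP, ⟨hbx, hxb⟩, ⟨hbx', hxb'⟩⟩
      obtain ⟨v, hv, hbv⟩ := rDvd_ex hmul hinv hb hbx    -- b * v = x
      obtain ⟨w, hw, hxw⟩ := rDvd_ex hmul hinv hxP hxb   -- x * w = b
      obtain ⟨u, hu, hub⟩ := lDvd_ex hmul hinv hb hbx'   -- u * b = x
      obtain ⟨u', hu', hux⟩ := lDvd_ex hmul hinv hxP hxb' -- u' * x = b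
      have E1 : x * (s' * s) = x := by
        rw [← hub, ← htb]
        simp only [mul_assoc]
        rw [hA, hsc]
      have E2 : t * (t' * x) = x := by
        rw [← hbv, hB', hB]
      have yP : t' * (x * s') ∈ P := hmul _ ht' _ (hmul _ hxP _ hs')
      have m1 : a * (s * (v * s')) = t' * (x * s') := by
        calc a * (s * (v * s')) = c * (v * s') := hA' _
          _ = t' * (b * (v * s')) := (hB' _).symm
          _ = t' * ((b * v) * s') := by rw [mul_assoc]
          _ = t' * (x * s') := by rw [hbv]
      have E3 : t' * (x * s') * s = t' * x := by
        simp only [mul_assoc]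
        rw [E1]
      have m2 : t' * (x * s') * (s * (w * s')) = a := by
        calc t' * (x * s') * (s * (w * s'))
            = (t' * (x * s') * s) * (w * s') := (mul_assoc _ _ _).symm
          _ = t' * x * (w * s') := by rw [E3]
          _ = t' * (b * s') := by rw [mul_assoc, ← mul_assoc x w s', hxw]
          _ = c * s' := hB' s'
          _ = a := hs'a
      have m3 : t' * (u * t) * a = t' * (x * s') := by
        rw [← hub, ← htb, ← hs'a]
        simp only [mul_assoc]
      have E4 : t * (t' * (x * s')) = x * s' := by
        rw [← mul_assoc t', ← mul_assoc, E2]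
      have m4 : t' * (u' * t) * (t' * (x * s')) = a := by
        calc t' * (u' * t) * (t' * (x * s'))
            = t' * (u' * (t * (t' * (x * s')))) := by simp only [mul_assoc]
          _ = t' * (u' * (x * s')) := by rw [E4]
          _ = t' * (b * s') := by rw [← mul_assoc u', hux]
          _ = a := by rw [hB', hs'a]
      refine ⟨⟨yP, ⟨⟨Or.inr ⟨_, hmul _ hs _ (hmul _ hv _ hs'), m1⟩,
        Or.inr ⟨_, hmul _ hs _ (hmul _ hw _ hs'), m2⟩⟩,
        ⟨Or.inr ⟨_, hmul _ ht' _ (hmul _ hu _ ht), m3⟩,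
        Or.inr ⟨_, hmul _ ht' _ (hmul _ hu' _ ht), m4⟩⟩⟩⟩, ?_⟩
      rw [E1]
      exact E2
    · rintro ⟨⟨hyP, ⟨hay, hya⟩, ⟨hay', hya'⟩⟩, hfix⟩
      obtain ⟨p, hp, hap⟩ := rDvd_ex hmul hinv ha hay    -- a * p = y
      obtain ⟨q, hq, hyq⟩ := rDvd_ex hmul hinv hyP hya   -- y * q = a
      obtain ⟨r, hr, hra⟩ := lDvd_ex hmul hinv ha hay'   -- r * a = y
      obtain ⟨r', hr', hry⟩ := lDvd_ex hmul hinv hyP hya' -- r' * y = a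
      have hxeq : t * ((t' * (x * s')) * s) = x := by
        simp only [mul_assoc]
        exact hfix
      have hxP : x ∈ P := by
        rw [← hxeq]
        exact hmul _ ht _ (hmul _ hyP _ hs)
      have hE5 : ∀ z, t * (a * z) = b * (s' * z) := fun z => by
        rw [← hs'a, mul_assoc c s' z, hB]
      have n1 : b * (s' * (p * s)) = x := by
        calc b * (s' * (p * s)) = t * (a * (p * s)) := (hE5 _).symm
          _ = t * ((a * p) * s) := by rw [mul_assoc]
          _ = t * ((t' * (x * s')) * s) := by rw [hap]
          _ = x := hxeq
      have hYss : t' * (x * (s' * (s * s'))) = t' * (x * s') := by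
        have h1 : t' * (x * (s' * (s * s'))) = (t' * (x * s')) * (s * s') := by
          simp only [mul_assoc]
        rw [h1, ← hra]
        simp only [mul_assoc]
        rw [← mul_assoc a s s', hsc, hs'a]
      have hxs' : x * s' = t * (t' * (x * s')) := by
        conv_lhs => rw [← hxeq]
        simp only [mul_assoc]
        rw [hYss]
      have n2 : x * (s' * (q * s)) = b := by
        calc x * (s' * (q * s)) = (x * s') * (q * s) := (mul_assoc _ _ _).symm
          _ = (t * (t' * (x * s'))) * (q * s) := by rw [← hxs']
          _ = t * (((t' * (x * s')) * q) * s) := by simp only [mul_assoc]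
          _ = t * (a * s) := by rw [hyq]
          _ = b := by rw [hsc, htb]
      have n3 : (t * (r * t')) * b = x := by
        rw [← hxeq, ← hra]
        simp only [mul_assoc]
        rw [hsc, ← ht'c]
      have hxss : x * (s' * s) = x := by
        calc x * (s' * s) = (t * ((t' * (x * s')) * s)) * (s' * s) := by rw [hxeq]
          _ = t * ((t' * (x * (s' * (s * s')))) * s) := by simp only [mul_assoc]
          _ = t * ((t' * (x * s')) * s) := by rw [hYss]
          _ = x := hxeq
      have hys : (t' * (x * s')) * s = t' * x := by
        simp only [mul_assoc]
        rw [hxss]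
      have n4 : (t * (r' * t')) * x = b := by
        simp only [mul_assoc]
        rw [← hys, ← mul_assoc r' (t' * (x * s')) s, hry, hsc, htb]
      exact ⟨hxP, ⟨⟨Or.inr ⟨_, hmul _ hs' _ (hmul _ hp _ hs), n1⟩,
        Or.inr ⟨_, hmul _ hs' _ (hmul _ hq _ hs), n2⟩⟩,
        ⟨Or.inr ⟨_, hmul _ ht _ (hmul _ hr _ ht'), n3⟩,
        Or.inr ⟨_, hmul _ ht _ (hmul _ hr' _ ht'), n4⟩⟩⟩⟩
  rw [hEq]
  exact hCclosed
end

section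
/- Let S be a topological inverse semigroup such that: (i) every maximal subgroup of S is H-closed in the class of topological groups; and (ii) every non-minimal idempotent of S is an isolated point of the subspace E(S) of idempotents. If T is a topological inverse semigroup containing S as a dense inverse subsemigroup (with the subspace topology) and T \ S ≠ ∅, then for every x ∈ T \ S at least one of the elements x·x⁻¹ or x⁻¹·x belongs to T \ S. -/
universe u v

set_option linter.unusedVariables false

namespace InvSG
open InverseSemigroup
variable {S : Type u} [InverseSemigroup S]

theorem inv_inv' (a : S) : a⁻¹⁻¹ = a :=
  (inv_unique a⁻¹ a (inv_mul_inv a) (mul_inv_mul a)).symm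

theorem idem_inv {e : S} (he : e * e = e) : e⁻¹ = e :=
  (inv_unique e e (by rw [he, he]) (by rw [he, he])).symm

theorem mul_inv_idem (a : S) : (a * a⁻¹) * (a * a⁻¹) = a * a⁻¹ := by
  rw [mul_assoc, ← mul_assoc a⁻¹ a a⁻¹, inv_mul_inv]

theorem inv_mul_idem (a : S) : (a⁻¹ * a) * (a⁻¹ * a) = a⁻¹ * a := by
  rw [mul_assoc, ← mul_assoc a a⁻¹ a, mul_inv_mul]

theorem idem_mul_idem {e f : S} (he : e * e = e) (hf : f * f = f) :
    (e * f) * (e * f) = e * f := by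
  have he' : ∀ x : S, e * (e * x) = e * x := fun x => by rw [← mul_assoc, he]
  have hf' : ∀ x : S, f * (f * x) = f * x := fun x => by rw [← mul_assoc, hf]
  set a := (e * f)⁻¹ with ha
  have h1 : (e * f) * (f * a * e) * (e * f) = e * f := by
    have h := mul_inv_mul (e * f)
    simp only [← ha] at h
    simp only [mul_assoc] at h ⊢
    simpa [hf', he'] using h
  have h2 : (f * a * e) * (e * f) * (f * a * e) = f * a * e := by
    have h := inv_mul_inv (e * f)
    simp only [← ha] at h
    simp only [mul_assoc] at h ⊢
    have h' : ∀ x : S, a * (e * (f * (a * x))) = a * x := fun x => by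
      have := congrArg (· * x) h
      simpa [mul_assoc] using this
    simp only [he', hf', h']
  have hfae : f * a * e = a := inv_unique (e * f) (f * a * e) h1 h2
  have haa : a * a = a := by
    conv_lhs => rw [← hfae]
    have h := inv_mul_inv (e * f)
    simp only [← ha] at h
    calc f * a * e * (f * a * e) = f * (a * (e * f) * a) * e := by
          simp only [mul_assoc]
        _ = f * a * e := by rw [h]
        _ = a := hfae
  have h := idem_inv haa
  have hef : e * f = a := by rw [← inv_inv' (e * f), ← ha, h]
  rw [hef, haa]

theorem idem_comm {e f : S} (he : e * e = e) (hf : f * f = f) : e * f = f * e := by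
  have he' : ∀ x : S, e * (e * x) = e * x := fun x => by rw [← mul_assoc, he]
  have hf' : ∀ x : S, f * (f * x) = f * x := fun x => by rw [← mul_assoc, hf]
  have hefi := idem_mul_idem he hf
  have hfei := idem_mul_idem hf he
  have h1 : (e * f) * (f * e) * (e * f) = e * f := by
    have := hefi
    simp only [mul_assoc] at this ⊢
    simpa [hf', he'] using this
  have h2 : (f * e) * (e * f) * (f * e) = f * e := by
    have := hfei
    simp only [mul_assoc] at this ⊢
    simpa [he', hf'] using this
  have h := inv_unique (e * f) (f * e) h1 h2
  rw [h, idem_inv hefi]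

theorem mul_inv_rev (a b : S) : (a * b)⁻¹ = b⁻¹ * a⁻¹ := by
  have hc := idem_comm (mul_inv_idem b) (inv_mul_idem a)
  have h1 : (a * b) * (b⁻¹ * a⁻¹) * (a * b) = a * b := by
    calc (a * b) * (b⁻¹ * a⁻¹) * (a * b)
        = a * ((b * b⁻¹) * (a⁻¹ * a)) * b := by simp only [mul_assoc]
      _ = a * ((a⁻¹ * a) * (b * b⁻¹)) * b := by rw [hc]
      _ = (a * a⁻¹ * a) * (b * b⁻¹ * b) := by simp only [mul_assoc]
      _ = a * b := by rw [mul_inv_mul, mul_inv_mul]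
  have h2 : (b⁻¹ * a⁻¹) * (a * b) * (b⁻¹ * a⁻¹) = b⁻¹ * a⁻¹ := by
    calc (b⁻¹ * a⁻¹) * (a * b) * (b⁻¹ * a⁻¹)
        = b⁻¹ * ((a⁻¹ * a) * (b * b⁻¹)) * a⁻¹ := by simp only [mul_assoc]
      _ = b⁻¹ * ((b * b⁻¹) * (a⁻¹ * a)) * a⁻¹ := by rw [hc]
      _ = (b⁻¹ * b * b⁻¹) * (a⁻¹ * a * a⁻¹) := by simp only [mul_assoc]
      _ = b⁻¹ * a⁻¹ := by rw [inv_mul_inv, inv_mul_inv]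
  exact (inv_unique (a * b) (b⁻¹ * a⁻¹) h1 h2).symm

/-- The set of elements whose two canonical idempotents are both `f`. -/
def HSet (f : S) : Set S := {t | t * t⁻¹ = f ∧ t⁻¹ * t = f}

theorem idem_mem_HSet {f : S} (hf : f * f = f) : f ∈ HSet f := by
  constructor <;> rw [idem_inv hf, hf]

theorem HSet_mul_mem {f : S} {t u : S} (ht : t ∈ HSet f) (hu : u ∈ HSet f) :
    t * u ∈ HSet f := by
  obtain ⟨ht1, ht2⟩ := ht
  obtain ⟨hu1, hu2⟩ := hu
  constructor
  · calc (t * u) * (t * u)⁻¹ = t * (u * u⁻¹) * t⁻¹ := by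
          rw [mul_inv_rev]; simp only [mul_assoc]
      _ = t * (t⁻¹ * t) * t⁻¹ := by rw [hu1, ← ht2]
      _ = t * t⁻¹ := by rw [← mul_assoc, mul_inv_mul]
      _ = f := ht1
  · calc (t * u)⁻¹ * (t * u) = u⁻¹ * (t⁻¹ * t) * u := by
          rw [mul_inv_rev]; simp only [mul_assoc]
      _ = u⁻¹ * (u * u⁻¹) * u := by rw [ht2, ← hu1]
      _ = u⁻¹ * u := by rw [← mul_assoc, inv_mul_inv]
      _ = f := hu2

theorem HClass_eq_HSet {f : S} (hf : f * f = f) : HClass f = HSet f := by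
  ext t
  constructor
  · rintro ⟨⟨hRft, hRtf⟩, ⟨hLft, hLtf⟩⟩
    have hft : f * t = t := by
      rcases hRft with h | ⟨s, hs⟩
      · rw [h, hf]
      · rw [← hs, ← mul_assoc, hf]
    have htf : t * f = t := by
      rcases hLft with h | ⟨s, hs⟩
      · rw [h, hf]
      · rw [← hs, mul_assoc, hf]
    constructor
    · rcases hRtf with h | ⟨s, hs⟩
      · rw [← h, idem_inv hf, hf]
      · have ha : (t * t⁻¹) * f = f := by
          rw [← hs, ← mul_assoc, mul_inv_mul]
        have hb : (t * t⁻¹) * f = t * t⁻¹ := by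
          rw [idem_comm (mul_inv_idem t) hf, ← mul_assoc, hft]
        rw [← hb]; exact ha
    · rcases hLtf with h | ⟨s, hs⟩
      · rw [← h, idem_inv hf, hf]
      · have ha : f * (t⁻¹ * t) = f := by
          rw [← hs]
          calc (s * t) * (t⁻¹ * t) = s * (t * t⁻¹ * t) := by simp only [mul_assoc]
            _ = s * t := by rw [mul_inv_mul]
        have hb : f * (t⁻¹ * t) = t⁻¹ * t := by
          rw [← idem_comm (inv_mul_idem t) hf, mul_assoc, htf]
        rw [← hb]; exact ha
  · rintro ⟨h1, h2⟩
    refine ⟨⟨Or.inr ⟨t, ?_⟩, Or.inr ⟨t⁻¹, h1⟩⟩, ⟨Or.inr ⟨t, ?_⟩, Or.inr ⟨t⁻¹, h2⟩⟩⟩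
    · rw [← h1, mul_assoc, ← mul_assoc, mul_inv_mul]
    · rw [← h2, ← mul_assoc, mul_inv_mul]

/-- The maximal subgroup at an idempotent `f`, as a group. -/
def hsetGroup {f : S} (hf : f * f = f) : Group (HSet f) where
  mul a b := ⟨a.1 * b.1, HSet_mul_mem a.2 b.2⟩
  mul_assoc a b c := Subtype.ext (mul_assoc a.1 b.1 c.1)
  one := ⟨f, idem_mem_HSet hf⟩
  one_mul a := Subtype.ext (by
    obtain ⟨a, h1, h2⟩ := a
    show f * a = a
    rw [← h1, mul_assoc, ← mul_assoc, mul_inv_mul])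
  mul_one a := Subtype.ext (by
    obtain ⟨a, h1, h2⟩ := a
    show a * f = a
    rw [← h2, ← mul_assoc, mul_inv_mul])
  inv a := ⟨a.1⁻¹, ⟨by rw [inv_inv']; exact a.2.2, by rw [inv_inv']; exact a.2.1⟩⟩
  inv_mul_cancel a := Subtype.ext a.2.2

end InvSG

namespace InvSG
variable {S : Type u} [InverseSemigroup S]

theorem conj_idem {u e f : S} (h1 : u * u⁻¹ = e) (h2 : u⁻¹ * u = f) :
    u⁻¹ * e * u = f := by
  rw [← h1, ← mul_assoc, InverseSemigroup.inv_mul_inv, h2]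

end InvSG

/-- A subset `A` of a topological magma (with the subspace topology and induced
multiplication) is H-closed in the class of topological groups: whenever `A` is embedded
topologically and multiplicatively into a Hausdorff topological group, its image is closed. -/
def IsHClosedGroupSet {X : Type u} [Mul X] [TopologicalSpace X] (A : Set X) : Prop :=
  ∀ (K : Type v) [Group K] [TopologicalSpace K] [IsTopologicalGroup K] [T2Space K]
    (f : A → K), Function.Injective f → Topology.IsInducing f →
    (∀ (x y : A) (h : (x : X) * (y : X) ∈ A), f ⟨(x : X) * (y : X), h⟩ = f x * f y) →
    IsClosed (Set.range f)

/-- Let `S` be a topological inverse semigroup such that (i) every maximal subgroup of `S`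
(the 𝓗-class of an idempotent) is H-closed in the class of topological groups, and
(ii) every non-minimal idempotent of `S` is isolated in `E(S)`. If `S` embeds as a dense
proper inverse subsemigroup into a topological inverse semigroup `T`, then for every
`x ∈ T \ S` at least one of `x·x⁻¹`, `x⁻¹·x` lies in `T \ S`. -/
theorem statement_6 {S : Type u} [InverseSemigroup S] [TopologicalSpace S] [T2Space S]
    [ContinuousMul S] [ContinuousInv S]
    (hgrp : ∀ e : S, e * e = e → IsHClosedGroupSet.{u, v} (HClass e))
    (hiso : ∀ e : S, e * e = e →
      (∃ f : S, f * f = f ∧ f ≠ e ∧ e * f = f ∧ f * e = f) →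
      ∃ U : Set S, IsOpen U ∧ U ∩ {x : S | x * x = x} = {e})
    (T : Type v) [InverseSemigroup T] [TopologicalSpace T] [T2Space T]
    [ContinuousMul T] [ContinuousInv T]
    (i : S → T) (hinj : Function.Injective i) (hind : Topology.IsInducing i)
    (hmul : ∀ x y : S, i (x * y) = i x * i y) (hinv : ∀ x : S, i x⁻¹ = (i x)⁻¹)
    (hdense : Dense (Set.range i)) (hproper : Set.range i ≠ Set.univ) :
    ∀ x : T, x ∉ Set.range i → x * x⁻¹ ∉ Set.range i ∨ x⁻¹ * x ∉ Set.range i := by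
  intro x hx
  by_contra hcon
  push_neg at hcon
  obtain ⟨⟨e, he⟩, ⟨f, hf⟩⟩ := hcon
  have hee : e * e = e := hinj (by rw [hmul, he]; exact InvSG.mul_inv_idem x)
  have hff : f * f = f := hinj (by rw [hmul, hf]; exact InvSG.inv_mul_idem x)
  have hFne : (Filter.comap i (nhds x)).NeBot := Filter.comap_neBot (fun t ht => by
    rcases mem_closure_iff_nhds.mp (hdense x) t ht with ⟨y, hyt, s, hs⟩
    exact ⟨s, hs ▸ hyt⟩)
  set F : Filter S := Filter.comap i (nhds x) with hFdef
  haveI : F.NeBot := hFne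
  have hti : Filter.Tendsto i F (nhds x) := Filter.tendsto_comap
  have hx' : i e * x * i f = x := by
    rw [he, hf, InverseSemigroup.mul_inv_mul, ← mul_assoc, InverseSemigroup.mul_inv_mul]
  have htphi : Filter.Tendsto (fun s => i (e * s * f)) F (nhds x) := by
    have h1 : Filter.Tendsto (fun s => i e * i s * i f) F (nhds (i e * x * i f)) :=
      (tendsto_const_nhds.mul hti).mul tendsto_const_nhds
    rw [hx'] at h1
    refine h1.congr fun s => ?_
    rw [hmul (e * s) f, hmul e s]
  have hphinv : ∀ s : S, (e * s * f)⁻¹ = f * s⁻¹ * e := fun s => by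
    rw [InvSG.mul_inv_rev, InvSG.mul_inv_rev, InvSG.idem_inv hff, InvSG.idem_inv hee,
      ← mul_assoc]
  have hg1 : Filter.Tendsto (fun s => (e * s * f) * (e * s * f)⁻¹) F (nhds e) := by
    rw [hind.tendsto_nhds_iff]
    have h1 : Filter.Tendsto (fun s => i (e * s * f) * (i (e * s * f))⁻¹) F
        (nhds (x * x⁻¹)) := htphi.mul htphi.inv
    rw [← he] at h1
    refine h1.congr fun s => ?_
    show i (e * s * f) * (i (e * s * f))⁻¹ = i ((e * s * f) * (e * s * f)⁻¹)
    rw [hmul (e * s * f) (e * s * f)⁻¹, hinv]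
  have hg2 : Filter.Tendsto (fun s => (e * s * f)⁻¹ * (e * s * f)) F (nhds f) := by
    rw [hind.tendsto_nhds_iff]
    have h1 : Filter.Tendsto (fun s => (i (e * s * f))⁻¹ * i (e * s * f)) F
        (nhds (x⁻¹ * x)) := htphi.inv.mul htphi
    rw [← hf] at h1
    refine h1.congr fun s => ?_
    show (i (e * s * f))⁻¹ * i (e * s * f) = i ((e * s * f)⁻¹ * (e * s * f))
    rw [hmul (e * s * f)⁻¹ (e * s * f), hinv]
  have keylem : ∀ e' : S, e' * e' = e' → ∀ g : S → S, (∀ s, g s * g s = g s) →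
      (∀ s, e' * g s = g s) → (∀ s, g s * e' = g s) →
      Filter.Tendsto g F (nhds e') → ∀ᶠ s in F, g s = e' := by
    intro e' he' g hgidem hl hr htg
    by_cases hmin : ∃ f' : S, f' * f' = f' ∧ f' ≠ e' ∧ e' * f' = f' ∧ f' * e' = f'
    · obtain ⟨U, hU, hUE⟩ := hiso e' he' hmin
      have heU : e' ∈ U := by
        have h : e' ∈ ({e'} : Set S) := rfl
        rw [← hUE] at h
        exact h.1
      filter_upwards [htg (hU.mem_nhds heU)] with s hs
      have h : g s ∈ U ∩ {z : S | z * z = z} := ⟨hs, hgidem s⟩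
      rwa [hUE] at h
    · filter_upwards with s
      by_contra hne
      exact hmin ⟨g s, hgidem s, hne, hl s, hr s⟩
  have hEe : ∀ᶠ s in F, (e * s * f) * (e * s * f)⁻¹ = e := by
    refine keylem e hee _ (fun s => InvSG.mul_inv_idem _) (fun s => ?_) (fun s => ?_) hg1
    · rw [hphinv]
      simp only [← mul_assoc]
      rw [hee]
    · rw [hphinv]
      simp only [← mul_assoc]
      rw [mul_assoc _ e e, hee]
  have hEf : ∀ᶠ s in F, (e * s * f)⁻¹ * (e * s * f) = f := by
    refine keylem f hff _ (fun s => InvSG.inv_mul_idem _) (fun s => ?_) (fun s => ?_) hg2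
    · rw [hphinv]
      simp only [← mul_assoc]
      rw [hff]
    · rw [hphinv]
      simp only [← mul_assoc]
      rw [mul_assoc _ f f, hff]
  obtain ⟨s₀, hs₀1, hs₀2⟩ := (hEe.and hEf).exists
  obtain ⟨b, hb1, hb2⟩ : ∃ b : S, b * b⁻¹ = e ∧ b⁻¹ * b = f := ⟨e * s₀ * f, hs₀1, hs₀2⟩
  -- properties of i b
  have h1' : i b * (i b)⁻¹ = x * x⁻¹ := by rw [← hinv, ← hmul, hb1, he]
  have h2' : (i b)⁻¹ * i b = i f := by rw [← hinv, ← hmul, hb2]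
  have hy1T : ((i b)⁻¹ * x) * ((i b)⁻¹ * x)⁻¹ = i f := by
    rw [InvSG.mul_inv_rev, InvSG.inv_inv']
    calc (i b)⁻¹ * x * (x⁻¹ * i b) = (i b)⁻¹ * (x * x⁻¹) * i b := by simp only [mul_assoc]
      _ = i f := InvSG.conj_idem h1' h2'
  have hy2T : ((i b)⁻¹ * x)⁻¹ * ((i b)⁻¹ * x) = i f := by
    rw [InvSG.mul_inv_rev, InvSG.inv_inv']
    calc x⁻¹ * i b * ((i b)⁻¹ * x) = x⁻¹ * (i b * (i b)⁻¹) * x := by simp only [mul_assoc]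
      _ = x⁻¹ * (x * x⁻¹) * x := by rw [h1']
      _ = x⁻¹ * x := by rw [← mul_assoc, InverseSemigroup.inv_mul_inv]
      _ = i f := hf.symm
  -- the maximal subgroup of T at i f
  have hfT : i f * i f = i f := by rw [← hmul, hff]
  letI gK : Group (InvSG.HSet (i f)) := InvSG.hsetGroup hfT
  haveI : ContinuousMul (InvSG.HSet (i f)) :=
    ⟨Continuous.subtype_mk
      ((continuous_subtype_val.comp continuous_fst).mul
        (continuous_subtype_val.comp continuous_snd)) _⟩
  haveI : ContinuousInv (InvSG.HSet (i f)) :=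
    ⟨Continuous.subtype_mk continuous_subtype_val.inv _⟩
  haveI : IsTopologicalGroup (InvSG.HSet (i f)) := {}
  have hHC : HClass f = InvSG.HSet f := InvSG.HClass_eq_HSet hff
  have memK : ∀ t : S, t ∈ InvSG.HSet f → i t ∈ InvSG.HSet (i f) := fun t ht =>
    ⟨by rw [← hinv, ← hmul, ht.1], by rw [← hinv, ← hmul, ht.2]⟩
  set Fm : ↥(HClass f) → ↥(InvSG.HSet (i f)) :=
    fun t => ⟨i t.1, memK t.1 (hHC ▸ t.2)⟩ with hFmdef
  have hFinj : Function.Injective Fm := by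
    intro a b h
    apply Subtype.ext
    apply hinj
    exact congrArg Subtype.val h
  have hFc : Continuous Fm :=
    Continuous.subtype_mk (hind.continuous.comp continuous_subtype_val) _
  have hFind : Topology.IsInducing Fm := by
    apply Topology.IsInducing.of_comp hFc continuous_subtype_val
    exact hind.comp Topology.IsInducing.subtypeVal
  have hFmul : ∀ (a b : ↥(HClass f)) (h : (a : S) * (b : S) ∈ HClass f),
      Fm ⟨(a : S) * (b : S), h⟩ = Fm a * Fm b := fun a b h =>
    Subtype.ext (hmul a.1 b.1)
  have hclosed : IsClosed (Set.range Fm) :=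
    hgrp f hff (InvSG.HSet (i f)) Fm hFinj hFind hFmul
  obtain ⟨y, hy⟩ : ∃ y : T, y = (i b)⁻¹ * x := ⟨_, rfl⟩
  rw [← hy] at hy1T hy2T
  have hyK : y ∈ InvSG.HSet (i f) := ⟨hy1T, hy2T⟩
  have hycl : (⟨y, hyK⟩ : InvSG.HSet (i f)) ∈ closure (Set.range Fm) := by
    rw [closure_subtype]
    have htg : Filter.Tendsto (fun s => i (b⁻¹ * (e * s * f))) F (nhds y) := by
      have h1 : Filter.Tendsto (fun s => (i b)⁻¹ * i (e * s * f)) F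
          (nhds ((i b)⁻¹ * x)) := tendsto_const_nhds.mul htphi
      rw [← hy] at h1
      refine h1.congr fun s => ?_
      show (i b)⁻¹ * i (e * s * f) = i (b⁻¹ * (e * s * f))
      rw [hmul b⁻¹ (e * s * f), hinv]
    refine mem_closure_of_tendsto htg ?_
    filter_upwards [hEe.and hEf] with s hs
    obtain ⟨hs1, hs2⟩ := hs
    have hmem : b⁻¹ * (e * s * f) ∈ InvSG.HSet f := by
      constructor
      · rw [InvSG.mul_inv_rev, InvSG.inv_inv']
        calc b⁻¹ * (e * s * f) * ((e * s * f)⁻¹ * b)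
            = b⁻¹ * ((e * s * f) * (e * s * f)⁻¹) * b := by simp only [mul_assoc]
          _ = b⁻¹ * e * b := by rw [hs1]
          _ = f := InvSG.conj_idem hb1 hb2
      · rw [InvSG.mul_inv_rev, InvSG.inv_inv']
        calc (e * s * f)⁻¹ * b * (b⁻¹ * (e * s * f))
            = (e * s * f)⁻¹ * (b * b⁻¹) * (e * s * f) := by simp only [mul_assoc]
          _ = (e * s * f)⁻¹ * e * (e * s * f) := by rw [hb1]
          _ = f := InvSG.conj_idem hs1 hs2
    exact ⟨Fm ⟨b⁻¹ * (e * s * f), hHC.symm ▸ hmem⟩, Set.mem_range_self _, rfl⟩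
  have hyR : (⟨y, hyK⟩ : InvSG.HSet (i f)) ∈ Set.range Fm := by
    rw [← hclosed.closure_eq]; exact hycl
  obtain ⟨t, ht⟩ := hyR
  have hity : i t.1 = y := congrArg Subtype.val ht
  have hxeq : x = i (b * (t : S)) := by
    rw [hmul, hity, hy]
    calc x = x * x⁻¹ * x := (InverseSemigroup.mul_inv_mul x).symm
      _ = i b * (i b)⁻¹ * x := by rw [h1']
      _ = i b * ((i b)⁻¹ * x) := by rw [mul_assoc]
  exact hx ⟨b * (t : S), hxeq.symm⟩
end

section
/- Let S be a topological inverse semigroup such that: (i) every maximal subgroup of S and the semilattice E(S) of idempotents of S (with the subspace topology) are H-closed in the class of topological inverse semigroups; and (ii) every non-minimal idempotent of S is an isolated point of E(S). Then S is H-closed in the class of topological inverse semigroups, i.e., S is a closed subset of every topological inverse semigroup T that contains S as an inverse subsemigroup with the subspace topology. -/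
universe u v

/-- A subset `A` of a topological magma (with the subspace topology and induced
multiplication) is H-closed in the class of topological inverse semigroups: whenever `A` is
embedded topologically and multiplicatively into a Hausdorff topological inverse semigroup,
its image is closed. -/
def IsHClosedTISSet {X : Type u} [Mul X] [TopologicalSpace X] (A : Set X) : Prop :=
  ∀ (T : Type v) [InverseSemigroup T] [TopologicalSpace T] [T2Space T]
    [ContinuousMul T] [ContinuousInv T] (f : A → T),
    Function.Injective f → Topology.IsInducing f →
    (∀ (x y : A) (h : (x : X) * (y : X) ∈ A), f ⟨(x : X) * (y : X), h⟩ = f x * f y) →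
    IsClosed (Set.range f)

/-- A topological magma `S` is H-closed in the class of topological inverse semigroups:
whenever `S` is embedded topologically and multiplicatively into a Hausdorff topological
inverse semigroup, its image is closed. -/
def IsHClosedTIS (S : Type u) [Mul S] [TopologicalSpace S] : Prop :=
  ∀ (T : Type v) [InverseSemigroup T] [TopologicalSpace T] [T2Space T]
    [ContinuousMul T] [ContinuousInv T] (f : S → T),
    Function.Injective f → Topology.IsInducing f →
    (∀ x y : S, f (x * y) = f x * f y) → IsClosed (Set.range f)

namespace ISAux
variable {M : Type u} [InverseSemigroup M]

lemma mim (a : M) : a * a⁻¹ * a = a := InverseSemigroup.mul_inv_mul a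
lemma imi (a : M) : a⁻¹ * a * a⁻¹ = a⁻¹ := InverseSemigroup.inv_mul_inv a

lemma inv_inv (a : M) : a⁻¹⁻¹ = a := (InverseSemigroup.inv_unique a⁻¹ a (imi a) (mim a)).symm

lemma idem_inv {e : M} (he : e * e = e) : e⁻¹ = e :=
  (InverseSemigroup.inv_unique e e (by rw [he, he]) (by rw [he, he])).symm

lemma mul_inv_idem (a : M) : (a * a⁻¹) * (a * a⁻¹) = a * a⁻¹ :=
  calc (a * a⁻¹) * (a * a⁻¹) = (a * a⁻¹ * a) * a⁻¹ := by simp only [mul_assoc]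
    _ = a * a⁻¹ := by rw [mim]

lemma inv_mul_idem (a : M) : (a⁻¹ * a) * (a⁻¹ * a) = a⁻¹ * a :=
  calc (a⁻¹ * a) * (a⁻¹ * a) = (a⁻¹ * a * a⁻¹) * a := by simp only [mul_assoc]
    _ = a⁻¹ * a := by rw [imi]

private lemma aux_idem {e f : M} (he : e * e = e) (hf : f * f = f) :
    (e * f) * (e * f) = e * f := by
  have h1 : (e * f) * (f * (e * f)⁻¹ * e) * (e * f) = e * f := by
    calc (e * f) * (f * (e * f)⁻¹ * e) * (e * f)
        = e * ((f * f) * (e * f)⁻¹ * (e * e)) * f := by simp only [mul_assoc]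
      _ = e * (f * (e * f)⁻¹ * e) * f := by rw [hf, he]
      _ = (e * f) * (e * f)⁻¹ * (e * f) := by simp only [mul_assoc]
      _ = e * f := mim _
  have h2 : (f * (e * f)⁻¹ * e) * (e * f) * (f * (e * f)⁻¹ * e) = f * (e * f)⁻¹ * e := by
    calc (f * (e * f)⁻¹ * e) * (e * f) * (f * (e * f)⁻¹ * e)
        = f * ((e * f)⁻¹ * ((e * e) * (f * f)) * (e * f)⁻¹) * e := by simp only [mul_assoc]
      _ = f * ((e * f)⁻¹ * (e * f) * (e * f)⁻¹) * e := by rw [he, hf]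
      _ = f * (e * f)⁻¹ * e := by rw [imi]
  have hbe : f * (e * f)⁻¹ * e = (e * f)⁻¹ := InverseSemigroup.inv_unique (e * f) _ h1 h2
  have hbidem : (e * f)⁻¹ * (e * f)⁻¹ = (e * f)⁻¹ := by
    conv_lhs => rw [← hbe]
    calc (f * (e * f)⁻¹ * e) * (f * (e * f)⁻¹ * e)
        = f * ((e * f)⁻¹ * (e * f) * (e * f)⁻¹) * e := by simp only [mul_assoc]
      _ = f * (e * f)⁻¹ * e := by rw [imi]
      _ = (e * f)⁻¹ := hbe
  have heq : e * f = (e * f)⁻¹ := by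
    conv_lhs => rw [← inv_inv (e * f)]
    exact idem_inv hbidem
  rw [heq]; exact hbidem

lemma mul_idem {e : M} (he : e * e = e) (a : M) : a * e * e = a * e := by
  rw [mul_assoc, he]

lemma idem_comm {e f : M} (he : e * e = e) (hf : f * f = f) : e * f = f * e := by
  have hefi := aux_idem he hf
  have hfei := aux_idem hf he
  have hA : (e * f) * (f * e) * (e * f) = e * f := by
    calc (e * f) * (f * e) * (e * f)
        = e * (f * f) * ((e * e) * f) := by simp only [mul_assoc]
      _ = (e * f) * (e * f) := by rw [hf, he]
      _ = e * f := hefi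
  have hB : (f * e) * (e * f) * (f * e) = f * e := by
    calc (f * e) * (e * f) * (f * e)
        = f * (e * e) * ((f * f) * e) := by simp only [mul_assoc]
      _ = (f * e) * (f * e) := by rw [he, hf]
      _ = f * e := hfei
  have h1 : f * e = (e * f)⁻¹ := InverseSemigroup.inv_unique (e * f) (f * e) hA hB
  rw [h1, idem_inv hefi]

lemma mul_inv_rev (a b : M) : (a * b)⁻¹ = b⁻¹ * a⁻¹ := by
  refine (InverseSemigroup.inv_unique (a * b) (b⁻¹ * a⁻¹) ?_ ?_).symm
  · calc (a * b) * (b⁻¹ * a⁻¹) * (a * b)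
        = a * ((b * b⁻¹) * (a⁻¹ * a)) * b := by simp only [mul_assoc]
      _ = a * ((a⁻¹ * a) * (b * b⁻¹)) * b := by
          rw [idem_comm (mul_inv_idem b) (inv_mul_idem a)]
      _ = (a * a⁻¹ * a) * (b * b⁻¹ * b) := by simp only [mul_assoc]
      _ = a * b := by rw [mim, mim]
  · calc (b⁻¹ * a⁻¹) * (a * b) * (b⁻¹ * a⁻¹)
        = b⁻¹ * ((a⁻¹ * a) * (b * b⁻¹)) * a⁻¹ := by simp only [mul_assoc]
      _ = b⁻¹ * ((b * b⁻¹) * (a⁻¹ * a)) * a⁻¹ := by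
          rw [idem_comm (inv_mul_idem a) (mul_inv_idem b)]
      _ = (b⁻¹ * b * b⁻¹) * (a⁻¹ * a * a⁻¹) := by simp only [mul_assoc]
      _ = b⁻¹ * a⁻¹ := by rw [imi, imi]

variable {N : Type v} [InverseSemigroup N]

lemma hom_inv {g : M → N} (hg : ∀ x y : M, g (x * y) = g x * g y) (a : M) :
    g a⁻¹ = (g a)⁻¹ := by
  refine InverseSemigroup.inv_unique (g a) (g a⁻¹) ?_ ?_
  · rw [← hg, ← hg, mim]
  · rw [← hg, ← hg, imi]

end ISAux

/-- Let `S` be a topological inverse semigroup such that (i) every maximal subgroup of `S`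
(the 𝓗-class of an idempotent) and the semilattice `E(S)` of idempotents are H-closed in
the class of topological inverse semigroups, and (ii) every non-minimal idempotent of `S`
is isolated in `E(S)`. Then `S` is H-closed in the class of topological inverse
semigroups. -/
theorem statement_7 {S : Type u} [InverseSemigroup S] [TopologicalSpace S] [T2Space S]
    [ContinuousMul S] [ContinuousInv S]
    (hgrp : ∀ e : S, e * e = e → IsHClosedTISSet.{u, v} (HClass e))
    (hsl : IsHClosedTISSet.{u, v} {x : S | x * x = x})
    (hiso : ∀ e : S, e * e = e →
      (∃ f : S, f * f = f ∧ f ≠ e ∧ e * f = f ∧ f * e = f) →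
      ∃ U : Set S, IsOpen U ∧ U ∩ {x : S | x * x = x} = {e}) :
    IsHClosedTIS.{u, v} S := by
  intro T _ _ _ _ _ g hinj hind hmul
  refine isClosed_of_closure_subset ?_
  intro x hx
  open Filter Topology ISAux in
  -- the trace filter
  have hFne : Filter.NeBot (Filter.comap g (𝓝 x)) := by
    rw [Filter.comap_neBot_iff]
    intro t ht
    rcases mem_closure_iff_nhds.mp hx t ht with ⟨y, hyt, s, rfl⟩
    exact ⟨s, hyt⟩
  set F := Filter.comap g (𝓝 x) with hF
  haveI := hFne
  have htend : Filter.Tendsto g F (𝓝 x) := Filter.tendsto_comap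
  have ginv : ∀ a : S, g a⁻¹ = (g a)⁻¹ := ISAux.hom_inv hmul
  -- E(S) image is closed
  have hEcl : IsClosed (Set.range (fun p : ({x : S | x * x = x} : Set S) => g p.val)) := by
    refine hsl T _ (fun p q hpq => Subtype.ext (hinj hpq)) (hind.comp Topology.IsInducing.subtypeVal) ?_
    intro p q h
    exact hmul _ _
  -- x * x⁻¹ and x⁻¹ * x come from idempotents of S
  have hxx : x * x⁻¹ ∈ Set.range (fun p : ({x : S | x * x = x} : Set S) => g p.val) := by
    refine hEcl.closure_subset (mem_closure_of_tendsto (htend.mul htend.inv) ?_)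
    refine Filter.Eventually.of_forall fun s => ?_
    exact ⟨⟨s * s⁻¹, ISAux.mul_inv_idem s⟩, by simp only [hmul, ginv]⟩
  have hxix : x⁻¹ * x ∈ Set.range (fun p : ({x : S | x * x = x} : Set S) => g p.val) := by
    refine hEcl.closure_subset (mem_closure_of_tendsto (htend.inv.mul htend) ?_)
    refine Filter.Eventually.of_forall fun s => ?_
    exact ⟨⟨s⁻¹ * s, ISAux.inv_mul_idem s⟩, by simp only [hmul, ginv]⟩
  obtain ⟨⟨e', he'E⟩, hge'⟩ := hxx
  obtain ⟨⟨f', hf'E⟩, hgf'⟩ := hxix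
  simp only [Set.mem_setOf_eq] at he'E hf'E
  simp only at hge' hgf'
  -- key isolation lemma
  have key : ∀ e0 : S, e0 * e0 = e0 → ∀ u : S → S,
      (∀ s, u s * u s = u s) → (∀ s, e0 * u s = u s) → (∀ s, u s * e0 = u s) →
      Filter.Tendsto (fun s => g (u s)) F (𝓝 (g e0)) → ∀ᶠ s in F, u s = e0 := by
    intro e0 he0 u huu hleft hright htendu
    by_cases hm : ∃ h : S, h * h = h ∧ h ≠ e0 ∧ e0 * h = h ∧ h * e0 = h
    · obtain ⟨U, hUo, hUE⟩ := hiso e0 he0 hm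
      obtain ⟨V, hVo, hVU⟩ := hind.isOpen_iff.mp hUo
      have he0U : e0 ∈ U := by
        have h := Set.mem_singleton e0
        rw [← hUE] at h
        exact h.1
      have hgeV : g e0 ∈ V := by
        rw [← hVU] at he0U
        exact he0U
      have hev : ∀ᶠ s in F, g (u s) ∈ V := htendu (hVo.mem_nhds hgeV)
      filter_upwards [hev] with s hsv
      have hU : u s ∈ U := by rw [← hVU]; exact hsv
      have hmem : u s ∈ U ∩ {x : S | x * x = x} := ⟨hU, huu s⟩
      rw [hUE] at hmem
      exact hmem
    · refine Filter.Eventually.of_forall fun s => ?_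
      by_contra hne
      exact hm ⟨u s, huu s, hne, hleft s, hright s⟩
  -- the corrected net t s = e' * s * f'
  have hX : Filter.Tendsto (fun s => g (e' * s * f')) F (𝓝 x) := by
    have h0 : Filter.Tendsto (fun s => g e' * g s * g f') F (𝓝 (g e' * x * g f')) :=
      (tendsto_const_nhds.mul htend).mul tendsto_const_nhds
    have h1 : g e' * x * g f' = x := by
      rw [hge', hgf', ISAux.mim, ← mul_assoc, ISAux.mim]
    rw [h1] at h0
    exact h0.congr fun s => by simp only [hmul]
  have hti : ∀ s : S, (e' * s * f')⁻¹ = f' * s⁻¹ * e' := by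
    intro s
    rw [ISAux.mul_inv_rev, ISAux.mul_inv_rev, ISAux.idem_inv hf'E, ISAux.idem_inv he'E,
      mul_assoc]
  -- eventually t s * (t s)⁻¹ = e'
  have hu : ∀ᶠ s in F, (e' * s * f') * (e' * s * f')⁻¹ = e' := by
    refine key e' he'E (fun s => (e' * s * f') * (e' * s * f')⁻¹)
      (fun s => ISAux.mul_inv_idem _) (fun s => ?_) (fun s => ?_) ?_
    · beta_reduce
      simp only [← mul_assoc, he'E]
    · beta_reduce
      rw [hti s]
      simp only [← mul_assoc, ISAux.mul_idem he'E, ISAux.mul_idem hf'E, he'E, hf'E]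
    · have h0 := hX.mul hX.inv
      rw [hge']
      exact h0.congr fun s => by simp only [hmul, ginv]
  -- eventually (t s)⁻¹ * t s = f'
  have hv : ∀ᶠ s in F, (e' * s * f')⁻¹ * (e' * s * f') = f' := by
    refine key f' hf'E (fun s => (e' * s * f')⁻¹ * (e' * s * f'))
      (fun s => ISAux.inv_mul_idem _) (fun s => ?_) (fun s => ?_) ?_
    · beta_reduce
      rw [hti s]
      simp only [← mul_assoc, ISAux.mul_idem he'E, ISAux.mul_idem hf'E, he'E, hf'E]
    · beta_reduce
      rw [hti s]
      simp only [← mul_assoc, ISAux.mul_idem he'E, ISAux.mul_idem hf'E, he'E, hf'E]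
    · have h0 := hX.inv.mul hX
      rw [hgf']
      exact h0.congr fun s => by simp only [hmul, ginv]
  obtain ⟨a₀, ha1, ha2⟩ := (hu.and hv).exists
  set a : S := e' * a₀ * f' with ha
  have haa : a * a⁻¹ = e' := ha1
  have hia : a⁻¹ * a = f' := ha2
  -- membership criterion for the maximal subgroup H(f')
  have hmemH : ∀ z : S, z * z⁻¹ = f' → z⁻¹ * z = f' → z ∈ HClass f' := by
    intro z h1 h2
    refine ⟨⟨Or.inr ⟨z, ?_⟩, Or.inr ⟨z⁻¹, h1⟩⟩, Or.inr ⟨z, ?_⟩, Or.inr ⟨z⁻¹, h2⟩⟩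
    · rw [← h1]; exact ISAux.mim z
    · rw [← h2, ← mul_assoc]; exact ISAux.mim z
  -- H(f') image is closed
  have hHcl : IsClosed (Set.range (fun p : (HClass f' : Set S) => g p.val)) := by
    refine hgrp f' hf'E T _ (fun p q hpq => Subtype.ext (hinj hpq))
      (hind.comp Topology.IsInducing.subtypeVal) ?_
    intro p q h
    exact hmul _ _
  -- the shifted net a⁻¹ * t s lands in H(f') and converges to (g a)⁻¹ * x
  have hwt : Filter.Tendsto (fun s => g (a⁻¹ * (e' * s * f'))) F (𝓝 ((g a)⁻¹ * x)) := by
    have h0 : Filter.Tendsto (fun s => (g a)⁻¹ * g (e' * s * f')) F (𝓝 ((g a)⁻¹ * x)) :=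
      tendsto_const_nhds.mul hX
    exact h0.congr fun s => by simp only [hmul, ginv]
  have hwH : ∀ᶠ s in F, g (a⁻¹ * (e' * s * f')) ∈
      Set.range (fun p : (HClass f' : Set S) => g p.val) := by
    filter_upwards [hu, hv] with s hs1 hs2
    have hw1 : (a⁻¹ * (e' * s * f')) * (a⁻¹ * (e' * s * f'))⁻¹ = f' := by
      calc (a⁻¹ * (e' * s * f')) * (a⁻¹ * (e' * s * f'))⁻¹
          = a⁻¹ * ((e' * s * f') * (e' * s * f')⁻¹) * a := by
            rw [ISAux.mul_inv_rev a⁻¹ (e' * s * f'), ISAux.inv_inv]; simp only [mul_assoc]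
        _ = a⁻¹ * e' * a := by rw [hs1]
        _ = f' := by rw [← haa, ← hia]; simp only [← mul_assoc, ISAux.imi]
    have hw2 : (a⁻¹ * (e' * s * f'))⁻¹ * (a⁻¹ * (e' * s * f')) = f' := by
      calc (a⁻¹ * (e' * s * f'))⁻¹ * (a⁻¹ * (e' * s * f'))
          = (e' * s * f')⁻¹ * (a * a⁻¹) * (e' * s * f') := by
            rw [ISAux.mul_inv_rev a⁻¹ (e' * s * f'), ISAux.inv_inv]; simp only [mul_assoc]
        _ = (e' * s * f')⁻¹ * (e' * (e' * s * f')) := by rw [haa, mul_assoc]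
        _ = (e' * s * f')⁻¹ * (e' * s * f') := by
            rw [show e' * (e' * s * f') = e' * s * f' from by simp only [← mul_assoc, he'E]]
        _ = f' := hs2
    exact ⟨⟨a⁻¹ * (e' * s * f'), hmemH _ hw1 hw2⟩, rfl⟩
  have hy : (g a)⁻¹ * x ∈ Set.range (fun p : (HClass f' : Set S) => g p.val) :=
    hHcl.closure_subset (mem_closure_of_tendsto hwt hwH)
  obtain ⟨⟨z, hzH⟩, hz⟩ := hy
  simp only at hz
  refine ⟨a * z, ?_⟩
  rw [hmul, hz, ← mul_assoc, ← ginv, ← hmul, haa, hge', ISAux.mim]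
end

section
/- Let λ ≥ 2 be a cardinal and suppose the λ-polycyclic monoid P_λ is a proper dense inverse subsemigroup of a topological inverse semigroup S (with the subspace topology on P_λ). Then for every x ∈ S \ P_λ, either x·x⁻¹ ∈ S \ P_λ or x⁻¹·x ∈ S \ P_λ. -/
universe u v

/-- The λ-polycyclic monoid over the index type `ι` (of cardinality λ), realized as
`(M_λ × M_λ) ∪ {0}` where `M_λ = FreeMonoid ι` is the free monoid on λ generators;
the pair `(a, b)` encodes the element `a⁻¹b` and `none` is the zero. -/
abbrev PolyMon (ι : Type u) : Type u := Option (FreeMonoid ι × FreeMonoid ι)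

/-- The nonzero element `a⁻¹b` of the polycyclic monoid. -/
def polyEl {ι : Type u} (a b : FreeMonoid ι) : PolyMon ι := some (a, b)

instance {ι : Type u} : Zero (PolyMon ι) := ⟨none⟩

instance {ι : Type u} : One (PolyMon ι) := ⟨polyEl 1 1⟩

open Classical in
/-- Multiplication of the polycyclic monoid:
`a⁻¹b · c⁻¹d = (c₁a)⁻¹d` if `c = c₁b`; `= a⁻¹(b₁d)` if `b = b₁c`; `= 0` otherwise,
and `0` is a two-sided zero. -/
noncomputable def polyMul {ι : Type u} (x y : PolyMon ι) : PolyMon ι :=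
  Option.bind x fun p => Option.bind y fun q =>
    if h : ∃ c₁ : FreeMonoid ι, q.1 = c₁ * p.2 then some (Classical.choose h * p.1, q.2)
    else if h' : ∃ b₁ : FreeMonoid ι, p.2 = b₁ * q.1 then some (p.1, Classical.choose h' * q.2)
    else none

noncomputable instance {ι : Type u} : Mul (PolyMon ι) := ⟨polyMul⟩

/-- Inversion of the polycyclic monoid: `(a⁻¹b)⁻¹ = b⁻¹a` and `0⁻¹ = 0`. -/
instance {ι : Type u} : Inv (PolyMon ι) :=
  ⟨fun x => Option.map (fun p => (p.2, p.1)) x⟩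

section helpers
variable {ι : Type u}

open Classical in
lemma pm_mul_some_some (u v q1 q2 : FreeMonoid ι) :
    (some (u,v) : PolyMon ι) * some (q1,q2) =
      if h : ∃ c₁ : FreeMonoid ι, q1 = c₁ * v then some (Classical.choose h * u, q2)
      else if h' : ∃ b₁ : FreeMonoid ι, v = b₁ * q1 then some (u, Classical.choose h' * q2)
      else none := rfl

lemma pm_none_mul (y : PolyMon ι) : (none : PolyMon ι) * y = none := rfl

lemma pm_mul_none (x : PolyMon ι) : x * (none : PolyMon ι) = none := by
  cases x <;> rfl

lemma pm_mul_fst {u v q1 q2 c : FreeMonoid ι} (h : q1 = c * v) :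
    (some (u,v) : PolyMon ι) * some (q1,q2) = some (c * u, q2) := by
  rw [pm_mul_some_some, dif_pos ⟨c, h⟩]
  have hs := Classical.choose_spec (⟨c, h⟩ : ∃ c₁ : FreeMonoid ι, q1 = c₁ * v)
  rw [mul_right_cancel (hs.symm.trans h)]

lemma pm_mul_snd {u v q1 q2 c : FreeMonoid ι} (h1 : ¬∃ c₁ : FreeMonoid ι, q1 = c₁ * v)
    (h : v = c * q1) :
    (some (u,v) : PolyMon ι) * some (q1,q2) = some (u, c * q2) := by
  rw [pm_mul_some_some, dif_neg h1, dif_pos ⟨c, h⟩]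
  have hs := Classical.choose_spec (⟨c, h⟩ : ∃ b₁ : FreeMonoid ι, v = b₁ * q1)
  rw [mul_right_cancel (hs.symm.trans h)]

lemma pm_mul_zero' {u v q1 q2 : FreeMonoid ι} (h1 : ¬∃ c₁ : FreeMonoid ι, q1 = c₁ * v)
    (h2 : ¬∃ b₁ : FreeMonoid ι, v = b₁ * q1) :
    (some (u,v) : PolyMon ι) * some (q1,q2) = none := by
  rw [pm_mul_some_some, dif_neg h1, dif_neg h2]

lemma pm_idem_pair (u : FreeMonoid ι) : (some (u,u) : PolyMon ι) * some (u,u) = some (u,u) := by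
  rw [pm_mul_fst (c := (1:FreeMonoid ι)) (one_mul u).symm, one_mul]

lemma pm_mul_inv_self (u v : FreeMonoid ι) :
    (some (u,v) : PolyMon ι) * (some (u,v) : PolyMon ι)⁻¹ = some (u,u) := by
  show (some (u,v) : PolyMon ι) * (some (v,u)) = some (u,u)
  rw [pm_mul_fst (c := (1:FreeMonoid ι)) (one_mul v).symm, one_mul]

lemma pm_inv_self_mul (u v : FreeMonoid ι) :
    (some (u,v) : PolyMon ι)⁻¹ * (some (u,v) : PolyMon ι) = some (v,v) := by
  show (some (v,u) : PolyMon ι) * (some (u,v)) = some (v,v)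
  rw [pm_mul_fst (c := (1:FreeMonoid ι)) (one_mul u).symm, one_mul]

lemma pm_idem_some {u v : FreeMonoid ι} (h : (some (u,v) : PolyMon ι) * some (u,v) = some (u,v)) :
    u = v := by
  by_cases h1 : ∃ c : FreeMonoid ι, u = c * v
  · obtain ⟨c, hc⟩ := h1
    rw [pm_mul_fst hc] at h
    simp only [Option.some.injEq, Prod.mk.injEq] at h
    have hc1 : c = 1 := mul_right_cancel (h.1.trans (one_mul u).symm)
    rw [hc, hc1, one_mul]
  · by_cases h2 : ∃ d : FreeMonoid ι, v = d * u
    · obtain ⟨d, hd⟩ := h2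
      rw [pm_mul_snd h1 hd] at h
      simp only [Option.some.injEq, Prod.mk.injEq] at h
      have hd1 : d = 1 := mul_right_cancel (h.2.trans (one_mul v).symm)
      rw [hd, hd1, one_mul]
    · rw [pm_mul_zero' h1 h2] at h
      exact absurd h (by simp)

lemma fm_mul_eq_one {a b : FreeMonoid ι} (h : a * b = 1) : a = 1 ∧ b = 1 := by
  have h' := congrArg FreeMonoid.toList h
  simp only [FreeMonoid.toList_mul, FreeMonoid.toList_one, List.append_eq_nil_iff] at h'
  exact ⟨FreeMonoid.toList.injective (by simp [FreeMonoid.toList_one, h'.1]),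
         FreeMonoid.toList.injective (by simp [FreeMonoid.toList_one, h'.2])⟩

lemma fm_of_ne_one (g : ι) : FreeMonoid.of g ≠ 1 := by
  intro h
  have h' := congrArg FreeMonoid.toList h
  simp [FreeMonoid.toList_of, FreeMonoid.toList_one] at h'

lemma fm_last {a b : FreeMonoid ι} {x y : ι} (h : a * FreeMonoid.of x = b * FreeMonoid.of y) :
    x = y := by
  have h' := congrArg (fun l => l.getLast?) (congrArg FreeMonoid.toList h)
  simpa using h'

lemma fm_exists_concat {w : FreeMonoid ι} (h : w ≠ 1) :
    ∃ (w' : FreeMonoid ι) (x : ι), w = w' * FreeMonoid.of x := by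
  rcases List.eq_nil_or_concat w.toList with h' | ⟨L, x, h'⟩
  · exact absurd (FreeMonoid.toList.injective
      (by simp [h', FreeMonoid.toList_one])) h
  · exact ⟨FreeMonoid.ofList L, x, FreeMonoid.toList.injective
      (by simp [h', List.concat_eq_append])⟩

lemma fm_suffix_finite (b : FreeMonoid ι) : {s : FreeMonoid ι | ∃ w, b = w * s}.Finite := by
  have hsub : {s : FreeMonoid ι | ∃ w, b = w * s} ⊆
      FreeMonoid.ofList '' {l | l ∈ b.toList.tails} := by
    rintro s ⟨w, hw⟩
    refine ⟨s.toList, (List.mem_tails _ _).mpr ⟨w.toList, ?_⟩, by simp⟩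
    simpa [FreeMonoid.toList_mul] using (congrArg FreeMonoid.toList hw.symm)
  exact ((b.toList.tails.finite_toSet).image _).subset hsub

end helpers

section isolation
variable {ι : Type u} {S : Type v}

lemma isolated_idem [Mul S] [TopologicalSpace S] [T2Space S] [ContinuousMul S]
    (i : PolyMon ι → S) (hinj : Function.Injective i)
    (hmul : ∀ x y : PolyMon ι, i (x * y) = i x * i y)
    (g : ι) (b : FreeMonoid ι) :
    ∃ V : Set S, IsOpen V ∧ i (some (b,b)) ∈ V ∧
      ∀ z : PolyMon ι, z * z = z → i z ∈ V → z = some (b,b) := by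
  have hgb : FreeMonoid.of g * b = FreeMonoid.of g * b := rfl
  set gb : FreeMonoid ι := FreeMonoid.of g * b with hgb'
  -- the finite "bad" set
  set Bad : Set (PolyMon ι) :=
    {z : PolyMon ι | z = none ∨ ∃ s, (∃ w, b = w * s) ∧ s ≠ b ∧ z = some (s,s)} with hBad
  have hfinB : (i '' Bad).Finite := by
    apply Set.Finite.image
    have hsub : Bad ⊆ insert none ((fun s => (some (s,s) : PolyMon ι)) '' {s | ∃ w, b = w * s}) := by
      rintro z (rfl | ⟨s, hs, -, rfl⟩)
      · exact Set.mem_insert _ _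
      · exact Set.mem_insert_of_mem _ ⟨s, hs, rfl⟩
    exact (((fm_suffix_finite b).image _).insert none).subset hsub
  have hBclosed : IsClosed (i '' Bad) := hfinB.isClosed
  -- separate i (gb,gb) from i (b,b)
  have hne : i (some (gb,gb)) ≠ i (some (b,b)) := by
    intro h
    have h' := hinj h
    simp only [Option.some.injEq, Prod.mk.injEq] at h'
    have : FreeMonoid.of g * b = 1 * b := by rw [one_mul, ← hgb']; exact h'.1
    exact fm_of_ne_one g (mul_right_cancel this)
  obtain ⟨Y, Y', hYo, hY'o, htY, heY', hdisj⟩ := t2_separation hne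
  refine ⟨(i '' Bad)ᶜ ∩ ((fun s : S => s * i (some (b,b))) ⁻¹' {i (none : PolyMon ι)}ᶜ) ∩
      ((fun s : S => s * i (some (gb,gb))) ⁻¹' (Y ∩ {i (none : PolyMon ι)}ᶜ)) ∩ Y',
      ?_, ?_, ?_⟩
  · refine (((hBclosed.isOpen_compl).inter ?_).inter ?_).inter hY'o
    · exact (continuous_id.mul continuous_const).isOpen_preimage _
        (isOpen_compl_iff.mpr isClosed_singleton)
    · exact (continuous_id.mul continuous_const).isOpen_preimage _
        (hYo.inter (isOpen_compl_iff.mpr isClosed_singleton))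
  · -- membership of i (b,b)
    refine ⟨⟨⟨?_, ?_⟩, ?_⟩, heY'⟩
    · rintro ⟨z, hz, hiz⟩
      have hze := hinj hiz
      subst hze
      rcases hz with h0 | ⟨s, -, hsb, hss⟩
      · exact absurd h0 (by simp)
      · simp only [Option.some.injEq, Prod.mk.injEq] at hss
        exact hsb hss.1.symm
    · simp only [Set.mem_preimage]
      rw [← hmul, pm_idem_pair]
      simp only [Set.mem_compl_iff, Set.mem_singleton_iff]
      intro h
      exact absurd (hinj h) (by simp)
    · simp only [Set.mem_preimage]
      have hebt : (some (b,b) : PolyMon ι) * some (gb,gb) = some (gb,gb) := by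
        rw [pm_mul_fst (c := FreeMonoid.of g) hgb', ← hgb']
      rw [← hmul, hebt]
      refine ⟨htY, ?_⟩
      simp only [Set.mem_compl_iff, Set.mem_singleton_iff]
      intro h
      exact absurd (hinj h) (by simp)
  · -- pinning idempotents
    rintro z hidem ⟨⟨⟨hzB, hze⟩, hzt⟩, hzY'⟩
    cases z with
    | none => exact absurd ⟨none, Or.inl rfl, rfl⟩ hzB
    | some p =>
      obtain ⟨u, v⟩ := p
      have huv : u = v := pm_idem_some hidem
      subst huv
      by_cases h1 : ∃ w, u = w * b
      · obtain ⟨w, hw⟩ := h1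
        by_cases hw1 : w = 1
        · rw [hw, hw1, one_mul]
        · obtain ⟨w', x, hwx⟩ := fm_exists_concat hw1
          by_cases hxg : x = g
          · -- z * (gb,gb) = z, contradiction with Y / Y' disjointness
            have hu' : u = w' * gb := by rw [hw, hwx, hxg, hgb', mul_assoc]
            have hzt' : (some (u,u) : PolyMon ι) * some (gb,gb) = some (u,u) := by
              by_cases hc : ∃ c : FreeMonoid ι, gb = c * u
              · obtain ⟨c, hc⟩ := hc
                rw [pm_mul_fst hc]
                have h2 : (c * w') * gb = 1 * gb := by
                  rw [one_mul, mul_assoc, ← hu', ← hc]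
                obtain ⟨hc1, hw'1⟩ := fm_mul_eq_one (mul_right_cancel h2)
                have hugb : gb = u := by rw [hu', hw'1, one_mul]
                rw [hc1, one_mul, hugb]
              · rw [pm_mul_snd hc hu', ← hu']
            have hzY : i (some (u,u)) ∈ Y := by
              have := hzt
              simp only [Set.mem_preimage] at this
              rw [← hmul, hzt'] at this
              exact this.1
            exact absurd (Set.disjoint_left.mp hdisj hzY hzY') (fun h => h)
          · -- last letter ≠ g : z * (gb,gb) = 0, contradiction
            have hne1 : ¬∃ c : FreeMonoid ι, gb = c * u := by
              rintro ⟨c, hc⟩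
              rw [hgb', hw, hwx] at hc
              simp only [mul_assoc] at hc
              have e2 : (1 * FreeMonoid.of g) * b = ((c * w') * FreeMonoid.of x) * b := by
                simp only [one_mul, mul_assoc]
                exact hc
              exact hxg (fm_last (mul_right_cancel e2)).symm
            have hne2 : ¬∃ d : FreeMonoid ι, u = d * gb := by
              rintro ⟨d, hd⟩
              rw [hgb', hw, hwx] at hd
              simp only [mul_assoc] at hd
              have e2 : (w' * FreeMonoid.of x) * b = (d * FreeMonoid.of g) * b := by
                simp only [mul_assoc]
                exact hd
              exact hxg (fm_last (mul_right_cancel e2))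
            have hzt' : (some (u,u) : PolyMon ι) * some (gb,gb) = none :=
              pm_mul_zero' hne1 hne2
            have := hzt
            simp only [Set.mem_preimage] at this
            rw [← hmul, hzt'] at this
            exact absurd rfl this.2
      · by_cases h3 : ∃ w, b = w * u
        · have hub : u ≠ b := fun h => h1 ⟨1, by rw [h, one_mul]⟩
          exact absurd ⟨some (u,u), Or.inr ⟨u, h3, hub, rfl⟩, rfl⟩ hzB
        · have hze' : (some (u,u) : PolyMon ι) * some (b,b) = none :=
            pm_mul_zero' h3 h1
          have := hze
          simp only [Set.mem_preimage] at this
          rw [← hmul, hze'] at this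
          exact absurd rfl this

end isolation

/-- If the λ-polycyclic monoid `P_λ` (λ ≥ 2) is a proper dense inverse subsemigroup of a
topological inverse semigroup `S`, then for every `x ∈ S \ P_λ`, either `x·x⁻¹ ∈ S \ P_λ`
or `x⁻¹·x ∈ S \ P_λ`. -/
theorem statement_8 {ι : Type u} [Nontrivial ι]
    {S : Type v} [InverseSemigroup S] [TopologicalSpace S] [T2Space S]
    [ContinuousMul S] [ContinuousInv S]
    (i : PolyMon ι → S) (hinj : Function.Injective i)
    (hmul : ∀ x y : PolyMon ι, i (x * y) = i x * i y)
    (hinv : ∀ x : PolyMon ι, i x⁻¹ = (i x)⁻¹)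
    (hdense : Dense (Set.range i)) (hproper : Set.range i ≠ Set.univ) :
    ∀ x : S, x ∉ Set.range i → x * x⁻¹ ∉ Set.range i ∨ x⁻¹ * x ∉ Set.range i := by
  intro x hx
  by_contra hcon
  push_neg at hcon
  obtain ⟨hmem1, hmem2⟩ := hcon
  obtain ⟨eb, he⟩ := hmem1
  obtain ⟨fb, hf⟩ := hmem2
  -- idempotency of x*x⁻¹ and x⁻¹*x in S
  have hxx : (x * x⁻¹) * (x * x⁻¹) = x * x⁻¹ := by
    calc (x * x⁻¹) * (x * x⁻¹) = x * (x⁻¹ * x * x⁻¹) := by simp [mul_assoc]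
      _ = x * x⁻¹ := by rw [InverseSemigroup.inv_mul_inv]
  have hyy : (x⁻¹ * x) * (x⁻¹ * x) = x⁻¹ * x := by
    calc (x⁻¹ * x) * (x⁻¹ * x) = (x⁻¹ * (x * x⁻¹ * x))  := by simp [mul_assoc]
      _ = x⁻¹ * x := by rw [InverseSemigroup.mul_inv_mul]
  have heb : eb * eb = eb := hinj (by rw [hmul, he]; exact hxx)
  have hfb : fb * fb = fb := hinj (by rw [hmul, hf]; exact hyy)
  -- i none is a universal zero of S
  have hzero_left : ∀ s : S, i (none : PolyMon ι) * s = i (none : PolyMon ι) := by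
    intro s
    have hcl : IsClosed {s : S | i (none : PolyMon ι) * s = i (none : PolyMon ι)} :=
      isClosed_eq (continuous_const.mul continuous_id) continuous_const
    have hsub : Set.range i ⊆ {s : S | i (none : PolyMon ι) * s = i (none : PolyMon ι)} := by
      rintro _ ⟨y, rfl⟩
      show i (none : PolyMon ι) * i y = i (none : PolyMon ι)
      rw [← hmul]
      rfl
    have h2 := hcl.closure_subset_iff.mpr hsub
    rw [hdense.closure_eq] at h2
    exact h2 (Set.mem_univ s)
  have hzero_right : ∀ s : S, s * i (none : PolyMon ι) = i (none : PolyMon ι) := by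
    intro s
    have hcl : IsClosed {s : S | s * i (none : PolyMon ι) = i (none : PolyMon ι)} :=
      isClosed_eq (continuous_id.mul continuous_const) continuous_const
    have hsub : Set.range i ⊆ {s : S | s * i (none : PolyMon ι) = i (none : PolyMon ι)} := by
      rintro _ ⟨y, rfl⟩
      show i y * i (none : PolyMon ι) = i (none : PolyMon ι)
      rw [← hmul, pm_mul_none]
    have h2 := hcl.closure_subset_iff.mpr hsub
    rw [hdense.closure_eq] at h2
    exact h2 (Set.mem_univ s)
  -- eb and fb are nonzero
  cases eb with
  | none =>
    have : x = i (none : PolyMon ι) := by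
      calc x = x * x⁻¹ * x := (InverseSemigroup.mul_inv_mul x).symm
        _ = i (none : PolyMon ι) * x := by rw [he]
        _ = i (none : PolyMon ι) := hzero_left x
    exact hx ⟨none, this.symm⟩
  | some p =>
    obtain ⟨b, b2⟩ := p
    have hb : b = b2 := pm_idem_some heb
    subst hb
    cases fb with
    | none =>
      have : x = i (none : PolyMon ι) := by
        calc x = x * (x⁻¹ * x) := by rw [← mul_assoc, InverseSemigroup.mul_inv_mul]
          _ = x * i (none : PolyMon ι) := by rw [hf]
          _ = i (none : PolyMon ι) := hzero_right x
      exact hx ⟨none, this.symm⟩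
    | some q =>
      obtain ⟨c, c2⟩ := q
      have hc : c = c2 := pm_idem_some hfb
      subst hc
      obtain ⟨g, -, -⟩ := exists_pair_ne ι
      obtain ⟨Ve, hVeo, heVe, hVe⟩ := isolated_idem i hinj hmul g b
      obtain ⟨Vf, hVfo, hfVf, hVf⟩ := isolated_idem i hinj hmul g c
      set W : Set S := ((fun s : S => s * s⁻¹) ⁻¹' Ve) ∩ ((fun s : S => s⁻¹ * s) ⁻¹' Vf)
        with hW
      have hWo : IsOpen W :=
        (hVeo.preimage (continuous_id.mul continuous_inv)).inter
          (hVfo.preimage (continuous_inv.mul continuous_id))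
      have hxW : x ∈ W := by
        constructor
        · simp only [Set.mem_preimage]
          rw [← he]
          exact heVe
        · simp only [Set.mem_preimage]
          rw [← hf]
          exact hfVf
      have hpin : ∀ y : PolyMon ι, i y ∈ W → y = some (b, c) := by
        intro y hy
        have hy1 : i (y * y⁻¹) ∈ Ve := by
          rw [hmul, hinv]
          exact hy.1
        have hy2 : i (y⁻¹ * y) ∈ Vf := by
          rw [hmul, hinv]
          exact hy.2
        cases y with
        | none =>
          have h0 : (none : PolyMon ι) * (none : PolyMon ι)⁻¹ = none := rfl
          rw [h0] at hy1
          exact absurd (hVe none rfl hy1) (by simp)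
        | some p =>
          obtain ⟨u, v⟩ := p
          rw [pm_mul_inv_self] at hy1
          rw [pm_inv_self_mul] at hy2
          have h1 := hVe (some (u,u)) (pm_idem_pair u) hy1
          have h2 := hVf (some (v,v)) (pm_idem_pair v) hy2
          simp only [Option.some.injEq, Prod.mk.injEq] at h1 h2
          rw [h1.1, h2.1]
      have hW'o : IsOpen (W \ {i (some (b,c))}) := hWo.sdiff isClosed_singleton
      have hxW' : x ∈ W \ {i (some (b,c))} := by
        refine ⟨hxW, ?_⟩
        intro h
        exact hx ⟨some (b,c), (Set.mem_singleton_iff.mp h).symm⟩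
      obtain ⟨s, hs_range, hsW'⟩ := hdense.exists_mem_open hW'o ⟨x, hxW'⟩
      obtain ⟨y, rfl⟩ := hs_range
      exact hsW'.2 (Set.mem_singleton_iff.mpr (congrArg i (hpin y hsW'.1)))
end

section
/- Let λ ≥ 2 be a cardinal and let τ be a Hausdorff topology on the λ-polycyclic monoid P_λ making it a topological inverse semigroup, such that for every open neighborhood U(0) of 0 in (P_λ, τ) and every maximal chain L of the semilattice E(P_λ) the set U(0) ∩ L is infinite. Then (P_λ, τ) is absolutely H-closed in the class of topological inverse semigroups. -/
universe u v

/-- The natural partial order on idempotents: `e ≤ f` iff `ef = fe = e`. -/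
def idemLE {ι : Type u} (e f : PolyMon ι) : Prop := e * f = e ∧ f * e = e

/-- The semilattice `E(P_λ)` of idempotents of the polycyclic monoid. -/
def idemE (ι : Type u) : Set (PolyMon ι) := {x | x * x = x}

/-- A chain of the semilattice of idempotents of the polycyclic monoid. -/
def IsChainIdem {ι : Type u} (L : Set (PolyMon ι)) : Prop :=
  L ⊆ idemE ι ∧ ∀ e ∈ L, ∀ f ∈ L, idemLE e f ∨ idemLE f e

/-- A maximal chain of the semilattice of idempotents of the polycyclic monoid. -/
def IsMaxChainIdem {ι : Type u} (L : Set (PolyMon ι)) : Prop :=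
  IsChainIdem L ∧ ∀ L' : Set (PolyMon ι), IsChainIdem L' → L ⊆ L' → L' = L

namespace PolyAux

variable {ι : Type u}

/-! ### Free monoid helpers -/

theorem fm_len0 {a : FreeMonoid ι} (h : a.length = 0) : a = 1 :=
  by simpa [FreeMonoid.length_eq_zero] using h

theorem fm_eq_one_of_mul_right {a b : FreeMonoid ι} (h : a * b = b) : a = 1 := by
  have := congrArg FreeMonoid.length h
  simp only [FreeMonoid.length_mul] at this
  exact fm_len0 (by omega)

theorem fm_eq_one_of_mul_left {a b : FreeMonoid ι} (h : b * a = b) : a = 1 := by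
  have := congrArg FreeMonoid.length h
  simp only [FreeMonoid.length_mul] at this
  exact fm_len0 (by omega)

theorem fm_mul_eq_one {a b : FreeMonoid ι} (h : a * b = 1) : a = 1 ∧ b = 1 := by
  have := congrArg FreeMonoid.length h
  simp only [FreeMonoid.length_mul, FreeMonoid.length_one] at this
  exact ⟨fm_len0 (by omega), fm_len0 (by omega)⟩

/-- `Sfx v w` : `v` is a suffix of `w`. -/
def Sfx (v w : FreeMonoid ι) : Prop := ∃ c, w = c * v

theorem Sfx.refl (v : FreeMonoid ι) : Sfx v v := ⟨1, (one_mul v).symm⟩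

theorem Sfx.trans {u v w : FreeMonoid ι} (h1 : Sfx u v) (h2 : Sfx v w) : Sfx u w := by
  obtain ⟨c, rfl⟩ := h1; obtain ⟨d, rfl⟩ := h2; exact ⟨d * c, (mul_assoc _ _ _).symm⟩

theorem Sfx.length_le {u v : FreeMonoid ι} (h : Sfx u v) : u.length ≤ v.length := by
  obtain ⟨c, rfl⟩ := h; simp [FreeMonoid.length_mul]

theorem Sfx.antisymm {u v : FreeMonoid ι} (h1 : Sfx u v) (h2 : Sfx v u) : u = v := by
  obtain ⟨c, rfl⟩ := h1
  obtain rfl : c = 1 := by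
    have := h2.length_le
    simp only [FreeMonoid.length_mul] at this
    exact fm_len0 (by omega)
  rw [one_mul]

theorem sfx_iff_suffix {u v : FreeMonoid ι} :
    Sfx u v ↔ u.toList <:+ v.toList := by
  constructor
  · rintro ⟨c, rfl⟩; exact ⟨c.toList, rfl⟩
  · rintro ⟨t, ht⟩; exact ⟨FreeMonoid.ofList t, FreeMonoid.toList.injective (by simpa using ht.symm)⟩

theorem sfx_total {u v w : FreeMonoid ι} (h1 : Sfx u w) (h2 : Sfx v w) :
    Sfx u v ∨ Sfx v u := by
  rw [sfx_iff_suffix] at h1 h2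
  exact (List.suffix_or_suffix_of_suffix h1 h2).imp sfx_iff_suffix.mpr sfx_iff_suffix.mpr

theorem sfx_eq_of_length {u v : FreeMonoid ι} (h : Sfx u v) (hl : v.length ≤ u.length) : u = v := by
  rcases h with ⟨c, rfl⟩
  obtain rfl : c = 1 := by
    simp only [FreeMonoid.length_mul] at hl
    exact fm_len0 (by omega)
  rw [one_mul]

theorem sfx_finite (v : FreeMonoid ι) : {u : FreeMonoid ι | Sfx u v}.Finite := by
  have : {u : FreeMonoid ι | Sfx u v} ⊆ (fun l => FreeMonoid.ofList l) '' {l | l ∈ v.toList.tails} := by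
    intro u hu
    exact ⟨u.toList, by simpa [List.mem_tails] using sfx_iff_suffix.mp hu, by simp⟩
  exact Set.Finite.subset (Set.Finite.image _ (v.toList.tails.finite_toSet)) this

/-! ### Multiplication lemmas -/

theorem choose_eq {c b c₁ : FreeMonoid ι} (h : ∃ x : FreeMonoid ι, c = x * b) (hx : c = c₁ * b) :
    Classical.choose h = c₁ :=
  mul_right_cancel (a := Classical.choose h) (b := b) (by rw [← Classical.choose_spec h, hx])

theorem zero_mul' (x : PolyMon ι) : (0 : PolyMon ι) * x = 0 := rfl

theorem mul_zero' (x : PolyMon ι) : x * (0 : PolyMon ι) = 0 := by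
  show polyMul x none = none
  cases x <;> rfl

open Classical in
theorem mul_def (a b c d : FreeMonoid ι) :
    polyEl a b * polyEl c d = if h : ∃ c₁ : FreeMonoid ι, c = c₁ * b
      then some (Classical.choose h * a, d)
      else if h' : ∃ b₁ : FreeMonoid ι, b = b₁ * c then some (a, Classical.choose h' * d)
      else none := rfl

theorem mul_left_div {a b c d c₁ : FreeMonoid ι} (h : c = c₁ * b) :
    polyEl a b * polyEl c d = polyEl (c₁ * a) d := by
  rw [mul_def, dif_pos ⟨c₁, h⟩, choose_eq ⟨c₁, h⟩ h]; rfl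

theorem mul_right_div {a b c d b₁ : FreeMonoid ι} (h : b = b₁ * c) :
    polyEl a b * polyEl c d = polyEl a (b₁ * d) := by
  by_cases hc : ∃ x : FreeMonoid ι, c = x * b
  · obtain ⟨x, hx⟩ := hc
    rw [hx] at h
    have hb1 : b₁ * x = 1 := fm_eq_one_of_mul_right (by rw [← mul_assoc] at h; exact h.symm)
    obtain ⟨rfl, rfl⟩ := fm_mul_eq_one hb1
    rw [one_mul] at hx h ⊢
    subst hx
    rw [mul_left_div (c₁ := 1) (one_mul _).symm, one_mul]
  · rw [mul_def, dif_neg hc, dif_pos ⟨b₁, h⟩, choose_eq ⟨b₁, h⟩ h]; rfl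

theorem mul_zero_of {a b c d : FreeMonoid ι} (h1 : ¬ Sfx b c) (h2 : ¬ Sfx c b) :
    polyEl a b * polyEl c d = 0 := by
  rw [mul_def, dif_neg (fun ⟨x, hx⟩ => h1 ⟨x, hx⟩), dif_neg (fun ⟨x, hx⟩ => h2 ⟨x, hx⟩)]; rfl

theorem one_def : (1 : PolyMon ι) = polyEl 1 1 := rfl

theorem mul_one' (x : PolyMon ι) : x * (1 : PolyMon ι) = x := by
  cases x with
  | none => rfl
  | some p => 
    show polyEl p.1 p.2 * polyEl 1 1 = polyEl p.1 p.2
    rw [mul_right_div (b₁ := p.2) (mul_one _).symm, mul_one]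

theorem one_mul' (x : PolyMon ι) : (1 : PolyMon ι) * x = x := by
  cases x with
  | none => rfl
  | some p =>
    show polyEl 1 1 * polyEl p.1 p.2 = polyEl p.1 p.2
    rw [mul_left_div (c₁ := p.1) (mul_one _).symm, mul_one]

theorem inv_el (a b : FreeMonoid ι) : (polyEl a b)⁻¹ = polyEl b a := rfl
theorem inv_zero' : ((0 : PolyMon ι))⁻¹ = 0 := rfl


/-! ### Derived product computations -/

-- (a,b)(b,c) = (a,c)
theorem mul_match (a b c : FreeMonoid ι) : polyEl a b * polyEl b c = polyEl a c := by
  rw [mul_left_div (c₁ := 1) (one_mul b).symm, one_mul]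

-- (a,b)(b,a) = (a,a)
theorem mul_inv_self (a b : FreeMonoid ι) : polyEl a b * polyEl b a = polyEl a a := mul_match a b a

theorem el_reg (a b : FreeMonoid ι) : polyEl a b * polyEl b a * polyEl a b = polyEl a b := by
  rw [mul_inv_self, mul_match]

theorem reg (x : PolyMon ι) : x * x⁻¹ * x = x := by
  cases x with
  | none => rfl
  | some p => exact el_reg p.1 p.2

theorem reg' (x : PolyMon ι) : x⁻¹ * x * x⁻¹ = x⁻¹ := by
  cases x with
  | none => rfl
  | some p => exact el_reg p.2 p.1

-- idempotent products
theorem e_mul_e_of_sfx {v w : FreeMonoid ι} (h : Sfx v w) :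
    polyEl w w * polyEl v v = polyEl w w ∧ polyEl v v * polyEl w w = polyEl w w := by
  obtain ⟨c, rfl⟩ := h
  constructor
  · rw [mul_right_div (b₁ := c) rfl]
  · rw [mul_left_div (c₁ := c) rfl]

theorem e_mul_e_zero {v w : FreeMonoid ι} (h1 : ¬ Sfx v w) (h2 : ¬ Sfx w v) :
    polyEl w w * polyEl v v = 0 := mul_zero_of h2 h1

theorem idem_iff {x : PolyMon ι} : x ∈ idemE ι ↔ x = 0 ∨ ∃ a, x = polyEl a a := by
  constructor
  · intro hx
    cases x with
    | none => exact Or.inl rfl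
    | some p =>
      obtain ⟨a, b⟩ := p
      refine Or.inr ⟨a, ?_⟩
      have hx : polyEl a b * polyEl a b = polyEl a b := hx
      by_cases hc : ∃ c₁, a = c₁ * b
      · obtain ⟨c₁, hc₁⟩ := hc
        rw [mul_left_div hc₁] at hx
        simp only [polyEl, Option.some.injEq, Prod.mk.injEq] at hx
        have : c₁ = 1 := fm_eq_one_of_mul_right hx.1
        subst this; rw [one_mul] at hc₁; subst hc₁; rfl
      · by_cases hb : ∃ b₁, b = b₁ * a
        · obtain ⟨b₁, hb₁⟩ := hb
          rw [mul_right_div hb₁] at hx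
          simp only [polyEl, Option.some.injEq, Prod.mk.injEq] at hx
          have : b₁ = 1 := fm_eq_one_of_mul_right hx.2
          subst this; rw [one_mul] at hb₁; subst hb₁; rfl
        · rw [mul_zero_of (fun ⟨x,hx⟩ => hc ⟨x,hx⟩) (fun ⟨x,hx⟩ => hb ⟨x,hx⟩)] at hx
          exact absurd hx (by simp [polyEl])
  · rintro (rfl | ⟨a, rfl⟩)
    · rfl
    · exact (e_mul_e_of_sfx (Sfx.refl a)).1


/-! ### Homomorphisms from the polycyclic monoid -/

theorem mul_el_one {p q b : FreeMonoid ι} (h : polyEl p q * polyEl b 1 = 1) :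
    p = 1 ∧ q = b := by
  by_cases hc : ∃ x, b = x * q
  · obtain ⟨x, hx⟩ := hc
    rw [mul_left_div hx] at h
    simp only [one_def, polyEl, Option.some.injEq, Prod.mk.injEq] at h
    obtain ⟨hx1, -⟩ := h
    obtain ⟨rfl, rfl⟩ := fm_mul_eq_one hx1
    rw [one_mul] at hx
    exact ⟨rfl, hx.symm⟩
  · by_cases hb : ∃ x, q = x * b
    · obtain ⟨x, hx⟩ := hb
      rw [mul_right_div hx] at h
      simp only [one_def, polyEl, Option.some.injEq, Prod.mk.injEq] at h
      obtain ⟨rfl, hx1⟩ := h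
      rw [mul_one] at hx1
      subst hx1
      rw [one_mul] at hx
      exact ⟨rfl, hx⟩
    · rw [mul_zero_of (fun ⟨x,hx⟩ => hc ⟨x,hx⟩) (fun ⟨x,hx⟩ => hb ⟨x,hx⟩)] at h
      exact absurd h (by simp [one_def, polyEl])

section Hom

variable {T : Type v} [InverseSemigroup T] (g : PolyMon ι → T)
  (hg : ∀ x y : PolyMon ι, g (x * y) = g x * g y)

include hg

theorem g_inv (x : PolyMon ι) : g x⁻¹ = (g x)⁻¹ :=
  InverseSemigroup.inv_unique (g x) (g x⁻¹)
    (by rw [← hg, ← hg, reg]) (by rw [← hg, ← hg, reg'])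

theorem const_of_one (h0 : g 1 = g 0) : ∀ x, g x = g 0 := by
  intro x
  calc g x = g (x * 1) := by rw [mul_one']
  _ = g x * g 1 := hg _ _
  _ = g x * g 0 := by rw [h0]
  _ = g (x * 0) := (hg _ _).symm
  _ = g 0 := by rw [mul_zero']

theorem one_eq_zero_of_el {a b : FreeMonoid ι} (h : g (polyEl a b) = g 0) : g 1 = g 0 := by
  have e1 : polyEl 1 a * polyEl a b * polyEl b 1 = (1 : PolyMon ι) := by
    rw [mul_match, mul_match]; rfl
  calc g 1 = g (polyEl 1 a * polyEl a b * polyEl b 1) := by rw [e1]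
  _ = g (polyEl 1 a) * g (polyEl a b) * g (polyEl b 1) := by rw [hg, hg]
  _ = g (polyEl 1 a) * g 0 * g (polyEl b 1) := by rw [h]
  _ = g (polyEl 1 a * 0 * polyEl b 1) := by rw [hg, hg]
  _ = g 0 := by rw [mul_zero', zero_mul']

theorem one_eq_zero_of_idem [Nontrivial ι] {p : FreeMonoid ι} (hp : p ≠ 1)
    (h : g (polyEl p p) = g 1) : g 1 = g 0 := by
  have hnil : p.toList ≠ [] := fun hn => hp (FreeMonoid.toList.injective hn)
  obtain ⟨j, hj⟩ := exists_ne (p.toList.getLast hnil)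
  have h1 : ¬ Sfx (FreeMonoid.of j) p := by
    rintro ⟨x, hx⟩
    apply hj
    have hlist : p.toList = x.toList ++ [j] := congrArg FreeMonoid.toList hx
    have h1 : p.toList.getLast? = some j := by rw [hlist]; exact List.getLast?_concat
    have h2 : p.toList.getLast? = some (p.toList.getLast hnil) := List.getLast?_eq_getLast hnil
    rw [h1] at h2
    exact Option.some.inj h2
  have h2 : ¬ Sfx p (FreeMonoid.of j) := by
    rintro ⟨x, hx⟩
    have hlen := congrArg FreeMonoid.length hx
    simp only [FreeMonoid.length_mul, FreeMonoid.length_of] at hlen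
    have hp1 : p.length ≠ 0 := fun h0 => hp (fm_len0 h0)
    have hx0 : x.length = 0 := by omega
    obtain rfl : x = 1 := fm_len0 hx0
    rw [one_mul] at hx
    exact h1 (hx ▸ Sfx.refl (FreeMonoid.of j))
  have hz : polyEl (FreeMonoid.of j) (FreeMonoid.of j) * polyEl p p = 0 := mul_zero_of h1 h2
  have : g (polyEl (FreeMonoid.of j) (FreeMonoid.of j)) = g 0 := by
    calc g (polyEl (FreeMonoid.of j) (FreeMonoid.of j))
        = g (polyEl (FreeMonoid.of j) (FreeMonoid.of j) * 1) := by rw [mul_one']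
    _ = g (polyEl (FreeMonoid.of j) (FreeMonoid.of j)) * g 1 := hg _ _
    _ = g (polyEl (FreeMonoid.of j) (FreeMonoid.of j)) * g (polyEl p p) := by rw [h]
    _ = g (polyEl (FreeMonoid.of j) (FreeMonoid.of j) * polyEl p p) := (hg _ _).symm
    _ = g 0 := by rw [hz]
  exact one_eq_zero_of_el g hg this

theorem one_eq_zero_of_pair [Nontrivial ι] {p q : FreeMonoid ι}
    (hne : polyEl p q ≠ 1) (h : g (polyEl p q) = g 1) : g 1 = g 0 := by
  have hqp : g (polyEl q p) = g 1 := by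
    have : g (polyEl p q)⁻¹ = (g (polyEl p q))⁻¹ := g_inv g hg _
    rw [inv_el] at this
    rw [this, h]
    have h2 : g ((1 : PolyMon ι)⁻¹) = (g 1)⁻¹ := g_inv g hg 1
    rw [← h2]; rfl
  have hpp : g (polyEl p p) = g 1 := by
    calc g (polyEl p p) = g (polyEl p q * polyEl q p) := by rw [mul_inv_self]
    _ = g (polyEl p q) * g (polyEl q p) := hg _ _
    _ = g 1 * g 1 := by rw [h, hqp]
    _ = g (1 * 1) := (hg _ _).symm
    _ = g 1 := by rw [one_mul']
  by_cases hp : p = 1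
  · subst hp
    have hq : q ≠ 1 := fun hq => hne (by rw [hq]; rfl)
    have hqq : g (polyEl q q) = g 1 := by
      calc g (polyEl q q) = g (polyEl q 1 * polyEl 1 q) := by rw [mul_match]
      _ = g (polyEl q 1) * g (polyEl 1 q) := hg _ _
      _ = g 1 * g 1 := by rw [hqp, h]
      _ = g (1 * 1) := (hg _ _).symm
      _ = g 1 := by rw [one_mul']
    exact one_eq_zero_of_idem g hg hq hqq
  · exact one_eq_zero_of_idem g hg hp hpp

theorem one_eq_zero_of_el_eq_one [Nontrivial ι] {x : PolyMon ι}
    (hne : x ≠ 1) (h : g x = g 1) : g 1 = g 0 := by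
  cases x with
  | none => exact h.symm
  | some p => exact one_eq_zero_of_pair g hg (by exact hne) (by exact h)

theorem const_of_not_injective [Nontrivial ι] (hni : ¬ Function.Injective g) :
    ∀ x, g x = g 0 := by
  apply const_of_one g hg
  simp only [Function.Injective, not_forall] at hni
  obtain ⟨u, v, guv, hne⟩ := hni
  -- reduce to the case of two distinct nonzero elements, or an element equal to zero
  cases u with
  | none => cases v with
    | none => exact absurd rfl hne
    | some pv => exact one_eq_zero_of_el g hg (a := pv.1) (b := pv.2) guv.symm
  | some pu =>
    cases v with
    | none => exact one_eq_zero_of_el g hg (a := pu.1) (b := pu.2) guv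
    | some pv =>
      obtain ⟨a, b⟩ := pu
      obtain ⟨c, d⟩ := pv
      -- g 1 = g ((1,a)*(c,d)*(b,1))
      have key : g 1 = g (polyEl 1 a * polyEl c d * polyEl b 1) := by
        calc g 1 = g (polyEl 1 a * polyEl a b * polyEl b 1) := by
              rw [mul_match, mul_match]; rfl
        _ = g (polyEl 1 a) * g (polyEl a b) * g (polyEl b 1) := by rw [hg, hg]
        _ = g (polyEl 1 a) * g (polyEl c d) * g (polyEl b 1) := by
              rw [show g (polyEl a b) = g (polyEl c d) from guv]
        _ = g (polyEl 1 a * polyEl c d * polyEl b 1) := by rw [hg, hg]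
      by_cases hac : ∃ x, c = x * a
      · obtain ⟨c₁, hc₁⟩ := hac
        rw [mul_left_div hc₁, mul_one] at key
        rcases hprod : polyEl c₁ d * polyEl b 1 with _ | pq
        · rw [hprod] at key; exact key.trans rfl
        · rw [hprod] at key
          by_cases hone : (some pq : PolyMon ι) = 1
          · rw [hone] at hprod
            obtain ⟨h1, h2⟩ := mul_el_one hprod
            subst h1; subst h2
            rw [one_mul] at hc₁
            exact absurd (by rw [hc₁]) hne
          · exact one_eq_zero_of_el_eq_one g hg hone key.symm
      · by_cases hca : ∃ x, a = x * c
        · obtain ⟨a₁, ha₁⟩ := hca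
          rw [mul_right_div ha₁] at key
          rcases hprod : polyEl 1 (a₁ * d) * polyEl b 1 with _ | pq
          · rw [hprod] at key; exact key.trans rfl
          · rw [hprod] at key
            by_cases hone : (some pq : PolyMon ι) = 1
            · rw [hone] at hprod
              obtain ⟨-, h2⟩ := mul_el_one hprod
              -- h2 : a₁ * d = b
              by_cases ha1 : a₁ = 1
              · subst ha1
                rw [one_mul] at ha₁ h2
                exact absurd (by rw [ha₁, h2]) hne
              · -- u' = (1,c)*(a,b)*(d,1) = (a₁,a₁), and g u' = g 1
                have key2 : g 1 = g (polyEl 1 c * polyEl a b * polyEl d 1) := by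
                  calc g 1 = g (polyEl 1 c * polyEl c d * polyEl d 1) := by
                        rw [mul_match, mul_match]; rfl
                  _ = g (polyEl 1 c) * g (polyEl c d) * g (polyEl d 1) := by rw [hg, hg]
                  _ = g (polyEl 1 c) * g (polyEl a b) * g (polyEl d 1) := by
                        rw [show g (polyEl c d) = g (polyEl a b) from guv.symm]
                  _ = g (polyEl 1 c * polyEl a b * polyEl d 1) := by rw [hg, hg]
                have hu' : polyEl 1 c * polyEl a b * polyEl d 1 = polyEl a₁ a₁ := by
                  rw [ha₁, ← h2]
                  rw [mul_left_div (c₁ := a₁) rfl, mul_one]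
                  rw [mul_right_div (b₁ := a₁) rfl, mul_one]
                rw [hu'] at key2
                exact one_eq_zero_of_idem g hg ha1 key2.symm
            · exact one_eq_zero_of_el_eq_one g hg hone key.symm
        · rw [mul_zero_of (fun ⟨x,hx⟩ => hac ⟨x,hx⟩) (fun ⟨x,hx⟩ => hca ⟨x,hx⟩), zero_mul'] at key
          exact key.trans rfl

end Hom

section MoreAux

theorem idemLE_el {a b : FreeMonoid ι} (h : idemLE (polyEl a a) (polyEl b b)) : Sfx b a := by
  by_cases hba : Sfx b a
  · exact hba
  by_cases hab : Sfx a b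
  · have h1 := (e_mul_e_of_sfx hab).2
    -- polyEl a a * polyEl b b = polyEl b b
    rw [h.1] at h1
    have : a = b := by
      have := h1.symm
      simp only [polyEl, Option.some.injEq, Prod.mk.injEq] at this
      exact this.1.symm
    exact this ▸ Sfx.refl a
  · exfalso
    have h0 : polyEl a a * polyEl b b = 0 := mul_zero_of (fun hx => hab hx) (fun hx => hba hx)
    rw [h.1] at h0
    exact absurd h0 (by simp [polyEl])

section Top

set_option linter.unusedSectionVars false
set_option maxHeartbeats 1000000

open Filter Topology

variable [TopologicalSpace (PolyMon ι)] [T2Space (PolyMon ι)]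
  [ContinuousMul (PolyMon ι)] [ContinuousInv (PolyMon ι)]
  {T : Type v} [InverseSemigroup T] [TopologicalSpace T] [T2Space T]
  [ContinuousMul T] [ContinuousInv T]
  (g : PolyMon ι → T)

theorem zmul (hg : ∀ x y : PolyMon ι, g (x * y) = g x * g y) (gc : Continuous g) :
    ∀ s ∈ closure (Set.range g), s * g 0 = g 0 ∧ g 0 * s = g 0 := by
  have h1 : IsClosed {s : T | s * g 0 = g 0 ∧ g 0 * s = g 0} := by
    exact IsClosed.inter (isClosed_eq (continuous_id.mul continuous_const) continuous_const)
      (isClosed_eq (continuous_const.mul continuous_id) continuous_const)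
  intro s hs
  refine h1.closure_subset_iff.mpr ?_ hs
  rintro - ⟨x, rfl⟩
  constructor
  · rw [← hg, mul_zero']
  · rw [← hg, zero_mul']

theorem creg (hg : ∀ x y : PolyMon ι, g (x * y) = g x * g y) :
    ∀ s ∈ closure (Set.range g), s * s⁻¹ * s = s ∧ s⁻¹ * s * s⁻¹ = s⁻¹ := by
  have h1 : IsClosed {s : T | s * s⁻¹ * s = s ∧ s⁻¹ * s * s⁻¹ = s⁻¹} := by
    refine IsClosed.inter (isClosed_eq ?_ continuous_id) (isClosed_eq ?_ continuous_inv) <;>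
      continuity
  intro s hs
  refine h1.closure_subset_iff.mpr ?_ hs
  rintro - ⟨x, rfl⟩
  simp only [Set.mem_setOf_eq]
  rw [← g_inv g hg]
  constructor
  · rw [← hg, ← hg, reg]
  · rw [← hg, ← hg, reg']

theorem core
    (hchain : ∀ U : Set (PolyMon ι), IsOpen U → (0 : PolyMon ι) ∈ U →
      ∀ L : Set (PolyMon ι), IsMaxChainIdem L → (U ∩ L).Infinite)
    (gc : Continuous g) (hg : ∀ x y : PolyMon ι, g (x * y) = g x * g y)
    (Ω : Ultrafilter (FreeMonoid ι)) (hfree : ∀ a : FreeMonoid ι, {a} ∉ Ω)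
    (t : T) (ht : Filter.Tendsto (fun w => g (polyEl w w)) Ω (𝓝 t)) (htt : t * t = t) :
    t = g 0 := by
  have hnofin : ∀ s : Set (FreeMonoid ι), s.Finite → s ∉ Ω := by
    intro s hs hmem
    obtain ⟨x, -, hx⟩ := Ultrafilter.eq_pure_of_finite_mem hs hmem
    exact hfree x (by rw [hx]; rfl)
  have htcl : t ∈ closure (Set.range g) := by
    refine mem_closure_iff_ultrafilter.mpr ⟨Ω.map (fun w => g (polyEl w w)), ?_, ht⟩
    exact Filter.mem_map.mpr (Filter.univ_mem' (fun w => Set.mem_preimage.mpr ⟨polyEl w w, rfl⟩))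
  have hmem_of : ∀ v : FreeMonoid ι, {w | Sfx v w} ∈ Ω → t * g (polyEl v v) = t := by
    intro v hv
    have h1 : Filter.Tendsto (fun w => g (polyEl w w) * g (polyEl v v)) Ω
        (𝓝 (t * g (polyEl v v))) := ht.mul tendsto_const_nhds
    have h2 : (fun w => g (polyEl w w) * g (polyEl v v)) =ᶠ[(Ω : Filter (FreeMonoid ι))]
        (fun w => g (polyEl w w)) := by
      filter_upwards [hv] with w hw
      rw [← hg, (e_mul_e_of_sfx hw).1]
    exact tendsto_nhds_unique (h1.congr' h2) ht
  have hnot : ∀ v : FreeMonoid ι, {w | Sfx v w} ∉ Ω → t * g (polyEl v v) = g 0 := by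
    intro v hv
    have h1 : Filter.Tendsto (fun w => g (polyEl w w) * g (polyEl v v)) Ω
        (𝓝 (t * g (polyEl v v))) := ht.mul tendsto_const_nhds
    have h2 : (fun w => g (polyEl w w) * g (polyEl v v)) =ᶠ[(Ω : Filter (FreeMonoid ι))]
        (fun _ => g 0) := by
      have hc1 : {w : FreeMonoid ι | Sfx v w}ᶜ ∈ Ω := (Ultrafilter.compl_mem_iff_notMem).mpr hv
      have hc2 : {w : FreeMonoid ι | Sfx w v}ᶜ ∈ Ω :=
        (Ultrafilter.compl_mem_iff_notMem).mpr (hnofin _ (sfx_finite v))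
      filter_upwards [hc1, hc2] with w hw1 hw2
      rw [← hg, e_mul_e_zero hw1 hw2]
    exact tendsto_nhds_unique (h1.congr' h2) tendsto_const_nhds
  by_cases hCC : {w : FreeMonoid ι | {w' | Sfx w w'} ∈ Ω} ∈ Ω
  case neg =>
    -- almost all w are not lower bounds: t * t = g 0
    have h2 : (fun w => t * g (polyEl w w)) =ᶠ[(Ω : Filter (FreeMonoid ι))] (fun _ => g 0) := by
      filter_upwards [(Ultrafilter.compl_mem_iff_notMem).mpr hCC] with w hw
      exact hnot w hw
    have h1 : Filter.Tendsto (fun w => t * g (polyEl w w)) Ω (𝓝 (t * t)) :=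
      tendsto_const_nhds.mul ht
    have := tendsto_nhds_unique (h1.congr' h2) tendsto_const_nhds
    rw [htt] at this
    exact this
  case pos =>
    set C := {w : FreeMonoid ι | {w' | Sfx w w'} ∈ Ω} with hC
    have hcomp : ∀ u ∈ C, ∀ v ∈ C, Sfx u v ∨ Sfx v u := by
      intro u hu v hv
      obtain ⟨w, hw⟩ := Filter.nonempty_of_mem (f := (Ω : Filter (FreeMonoid ι)))
        (Filter.inter_mem hu hv)
      exact sfx_total hw.1 hw.2
    have hCinf : C.Infinite := fun hfin => hnofin C hfin hCC
    -- lengths are unbounded on C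
    have hunb : ∀ n : ℕ, ∃ u ∈ C, n < u.length := by
      intro n
      by_contra hno
      push_neg at hno
      apply hCinf
      have hinj : Set.InjOn FreeMonoid.length C := by
        intro u hu v hv huv
        rcases hcomp u hu v hv with h | h
        · exact sfx_eq_of_length h (le_of_eq huv.symm)
        · exact (sfx_eq_of_length h (le_of_eq huv)).symm
      have himg : FreeMonoid.length '' C ⊆ Set.Iic n := by
        rintro - ⟨u, hu, rfl⟩; exact hno u hu
      exact Set.Finite.of_finite_image (Set.Finite.subset (Set.finite_Iic n) himg) hinj
    -- the maximal chain
    set L : Set (PolyMon ι) := insert (0 : PolyMon ι) ((fun v => polyEl v v) '' C) with hL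
    have hLchain : IsChainIdem L := by
      constructor
      · rintro x (rfl | ⟨v, hv, rfl⟩)
        · show (0 : PolyMon ι) * 0 = 0; rfl
        · exact idem_iff.mpr (Or.inr ⟨v, rfl⟩)
      · rintro e (rfl | ⟨u, hu, rfl⟩) f hf
        · exact Or.inl ⟨zero_mul' f, mul_zero' f⟩
        · rcases hf with rfl | ⟨v, hv, rfl⟩
          · exact Or.inr ⟨zero_mul' _, mul_zero' _⟩
          · rcases hcomp u hu v hv with h | h
            · exact Or.inr ⟨by exact (e_mul_e_of_sfx h).1, by exact (e_mul_e_of_sfx h).2⟩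
            · exact Or.inl ⟨by exact (e_mul_e_of_sfx h).1, by exact (e_mul_e_of_sfx h).2⟩
    have hLmax : IsMaxChainIdem L := by
      refine ⟨hLchain, fun L' hL' hsub => ?_⟩
      refine subset_antisymm (fun x hx => ?_) hsub
      rcases idem_iff.mp (hL'.1 hx) with rfl | ⟨v, rfl⟩
      · exact Or.inl rfl
      · obtain ⟨u, hu, hlen⟩ := hunb v.length
        have hcompar := hL'.2 _ hx _ (hsub (Or.inr ⟨u, hu, rfl⟩))
        have hvu : Sfx v u := by
          rcases hcompar with h | h
          · have := idemLE_el h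
            exfalso
            exact absurd (this.length_le) (by omega)
          · exact idemLE_el h
        refine Or.inr ⟨v, ?_, rfl⟩
        exact Filter.mem_of_superset hu (fun w hw => hvu.trans hw)
    -- the cluster filter at g 0
    set K : Set T := (fun v => g (polyEl v v)) '' C with hK
    have hNB : Filter.NeBot (𝓝 (g 0) ⊓ 𝓟 K) := by
      rw [Filter.inf_principal_neBot_iff]
      intro V hV
      obtain ⟨V', hV'sub, hV'open, hV'mem⟩ := mem_nhds_iff.mp hV
      have hpre : IsOpen (g ⁻¹' V') := hV'open.preimage gc
      have h0 : (0 : PolyMon ι) ∈ g ⁻¹' V' := hV'mem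
      have hinf := hchain _ hpre h0 L hLmax
      obtain ⟨x, hx⟩ := (hinf.diff (Set.finite_singleton 0)).nonempty
      obtain ⟨⟨hxV, hxL⟩, hx0⟩ := hx
      rcases hxL with rfl | ⟨v, hv, rfl⟩
      · exact absurd rfl hx0
      · exact ⟨g (polyEl v v), hV'sub hxV, ⟨v, hv, rfl⟩⟩
    -- t * s = t for s ∈ K
    have hmulK : ∀ s ∈ K, t * s = t := by
      rintro - ⟨v, hv, rfl⟩
      exact hmem_of v hv
    -- conclude t = g 0
    have htend : Filter.Tendsto (fun s => t * s) (𝓝 (g 0) ⊓ 𝓟 K) (𝓝 (g 0)) := by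
      have h1 : Filter.Tendsto (fun s => t * s) (𝓝 (g 0)) (𝓝 (t * g 0)) :=
        (continuous_const.mul continuous_id).tendsto (g 0)
      rw [(zmul g hg gc t htcl).1] at h1
      exact h1.mono_left inf_le_left
    have hsing : {t} ∈ Filter.map (fun s => t * s) (𝓝 (g 0) ⊓ 𝓟 K) := by
      refine Filter.mem_map.mpr (Filter.mem_of_superset (Filter.mem_inf_of_right
        (Filter.mem_principal_self K)) ?_)
      intro s hs
      exact hmulK s hs
    have : ∀ V ∈ 𝓝 (g 0), t ∈ V := by
      intro V hV
      have hVm : V ∈ Filter.map (fun s => t * s) (𝓝 (g 0) ⊓ 𝓟 K) := htend hV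
      have hne : (V ∩ {t}).Nonempty := Filter.nonempty_of_mem (Filter.inter_mem hVm hsing)
      obtain ⟨x, hxV, hxt⟩ := hne
      rwa [Set.mem_singleton_iff.mp hxt] at hxV
    have hcl : g 0 ∈ closure {t} := mem_closure_iff_nhds.mpr (fun V hV => ⟨t, this V hV, rfl⟩)
    rw [closure_singleton] at hcl
    exact (Set.mem_singleton_iff.mp hcl).symm
  
theorem lim_of_singleton {α : Type u} {t : T} (F : Filter α) [F.NeBot] (f : α → T)
    (hle : Filter.Tendsto f F (𝓝 t)) {x : α} (hx : {x} ∈ F) : t = f x := by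
  have h1 : {f x} ∈ F.map f := Filter.mem_map.mpr (Filter.mem_of_superset hx
    (fun y hy => by rw [Set.mem_singleton_iff.mp hy]; exact rfl))
  have h2 : ∀ W ∈ 𝓝 t, f x ∈ W := by
    intro W hW
    obtain ⟨z, hz1, hz2⟩ := Filter.nonempty_of_mem (Filter.inter_mem (hle hW) h1)
    rwa [Set.mem_singleton_iff.mp hz2] at hz1
  have hcl : t ∈ closure {f x} := mem_closure_iff_nhds.mpr (fun W hW => ⟨f x, h2 W hW, rfl⟩)
  rwa [closure_singleton, Set.mem_singleton_iff] at hcl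

theorem claim1
    (hchain : ∀ U : Set (PolyMon ι), IsOpen U → (0 : PolyMon ι) ∈ U →
      ∀ L : Set (PolyMon ι), IsMaxChainIdem L → (U ∩ L).Infinite)
    (gc : Continuous g) (hg : ∀ x y : PolyMon ι, g (x * y) = g x * g y)
    (ginj : Function.Injective g) :
    ∀ t ∈ closure (g '' idemE ι), t ∈ g '' idemE ι := by
  intro t ht
  obtain ⟨V, hVmem, hVle⟩ := mem_closure_iff_ultrafilter.mp ht
  have hrange : Set.range g ∈ V := Filter.mem_of_superset hVmem (Set.image_subset_range g _)
  set U : Ultrafilter (PolyMon ι) := V.comap ginj hrange with hU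
  have hUle : Filter.Tendsto g (U : Filter (PolyMon ι)) (𝓝 t) :=
    le_trans Filter.map_comap_le hVle
  have hEU : idemE ι ∈ U := by
    rw [hU, Ultrafilter.mem_comap]
    exact Filter.mem_of_superset hVmem (by rfl)
  have h0idem : (0 : PolyMon ι) ∈ idemE ι := rfl
  by_cases hsing : ∃ x, {x} ∈ U
  · obtain ⟨x, hx⟩ := hsing
    have hlim := lim_of_singleton (U : Filter (PolyMon ι)) g hUle hx
    have hxE : x ∈ idemE ι := by
      obtain ⟨z, hz1, hz2⟩ := Filter.nonempty_of_mem (f := (U : Filter (PolyMon ι)))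
        (Filter.inter_mem hEU hx)
      rwa [Set.mem_singleton_iff.mp hz2] at hz1
    exact ⟨x, hxE, hlim.symm⟩
  push_neg at hsing
  have h0 : {(0 : PolyMon ι)} ∉ U := hsing 0
  have hEnz : {x : PolyMon ι | ∃ a, x = polyEl a a} ∈ U := by
    have h0c : ({(0 : PolyMon ι)} : Set (PolyMon ι))ᶜ ∈ U :=
      (Ultrafilter.compl_mem_iff_notMem).mpr h0
    refine Filter.mem_of_superset (Filter.inter_mem hEU h0c) ?_
    rintro x ⟨hx1, hx2⟩
    rcases idem_iff.mp hx1 with rfl | h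
    · exact absurd rfl hx2
    · exact h
  set A : PolyMon ι → FreeMonoid ι := fun x => (x.getD (1, 1)).1 with hA
  have heq : (fun x : PolyMon ι => g (polyEl (A x) (A x))) =ᶠ[(U : Filter (PolyMon ι))] g := by
    filter_upwards [hEnz] with x hx
    obtain ⟨a, rfl⟩ := hx
    rfl
  have hGE : Filter.Tendsto (fun w => g (polyEl w w)) ((U : Filter (PolyMon ι)).map A) (𝓝 t) :=
    Filter.tendsto_map'_iff.mpr ((Filter.tendsto_congr' heq).mpr hUle)
  have hfree : ∀ a : FreeMonoid ι, {a} ∉ U.map A := by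
    intro a ha
    apply hsing (polyEl a a)
    have hpre : A ⁻¹' {a} ∈ U := ha
    refine Filter.mem_of_superset (Filter.inter_mem hpre hEnz) ?_
    rintro x ⟨hx1, b, rfl⟩
    have : b = a := hx1
    rw [this]
    rfl
  have htt : t * t = t := by
    have hcl : IsClosed {s : T | s * s = s} :=
      isClosed_eq (continuous_id.mul continuous_id) continuous_id
    have hsub : g '' idemE ι ⊆ {s : T | s * s = s} := by
      rintro - ⟨e, he, rfl⟩
      show g e * g e = g e
      rw [← hg, he]
    exact hcl.closure_subset_iff.mpr hsub ht
  have := core g hchain gc hg (U.map A) hfree t hGE htt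
  exact ⟨0, h0idem, this.symm⟩

theorem unitcase
    (hchain : ∀ U : Set (PolyMon ι), IsOpen U → (0 : PolyMon ι) ∈ U →
      ∀ L : Set (PolyMon ι), IsMaxChainIdem L → (U ∩ L).Infinite)
    (gc : Continuous g) (hg : ∀ x y : PolyMon ι, g (x * y) = g x * g y)
    (ginj : Function.Injective g) :
    ∀ u ∈ closure (Set.range g), u * u⁻¹ = g 1 → u⁻¹ * u = g 1 → u ∈ Set.range g := by
  intro u hu h1 h2
  obtain ⟨V, hVmem, hVle⟩ := mem_closure_iff_ultrafilter.mp hu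
  set U : Ultrafilter (PolyMon ι) := V.comap ginj hVmem with hU
  have hUle : Filter.Tendsto g (U : Filter (PolyMon ι)) (𝓝 u) :=
    le_trans Filter.map_comap_le hVle
  by_cases hsing : ∃ x, {x} ∈ U
  · obtain ⟨x, hx⟩ := hsing
    exact ⟨x, (lim_of_singleton (U : Filter (PolyMon ι)) g hUle hx).symm⟩
  exfalso
  push_neg at hsing
  have h0 : ({(0 : PolyMon ι)} : Set (PolyMon ι))ᶜ ∈ U :=
    (Ultrafilter.compl_mem_iff_notMem).mpr (hsing 0)
  set A1 : PolyMon ι → FreeMonoid ι := fun x => (x.getD (1, 1)).1 with hA1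
  set A2 : PolyMon ι → FreeMonoid ι := fun x => (x.getD (1, 1)).2 with hA2
  have hone : g (1 : PolyMon ι) * g 1 = g 1 := by rw [← hg, one_mul']
  -- first components
  have hr1 : Filter.Tendsto (fun x : PolyMon ι => g x * (g x)⁻¹) (U : Filter (PolyMon ι))
      (𝓝 (g 1)) := by
    have := hUle.mul hUle.inv
    rwa [h1] at this
  have heq1 : (fun x : PolyMon ι => g x * (g x)⁻¹) =ᶠ[(U : Filter (PolyMon ι))]
      (fun x => g (polyEl (A1 x) (A1 x))) := by
    filter_upwards [h0] with x hx
    cases x with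
    | none => exact absurd rfl hx
    | some pp =>
      show g (some pp) * (g (some pp))⁻¹ = _
      rw [← g_inv g hg, ← hg]
      have hinv : (some pp : PolyMon ι)⁻¹ = polyEl pp.2 pp.1 := rfl
      have hmm : (some pp : PolyMon ι) = polyEl pp.1 pp.2 := rfl
      rw [hinv, hmm, mul_inv_self]
      rfl
  have hGE1 : Filter.Tendsto (fun w => g (polyEl w w)) ((U : Filter (PolyMon ι)).map A1)
      (𝓝 (g 1)) :=
    Filter.tendsto_map'_iff.mpr ((Filter.tendsto_congr' heq1).mp hr1)
  have hA1one : {x : PolyMon ι | A1 x = 1} ∈ U := by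
    by_cases hs1 : ∃ a, {a} ∈ U.map A1
    · obtain ⟨a, ha⟩ := hs1
      have hlim := lim_of_singleton ((U : Filter (PolyMon ι)).map A1)
        (fun w => g (polyEl w w)) hGE1 ha
      have : polyEl a a = 1 := ginj hlim.symm
      have ha1 : a = 1 := by
        simp only [one_def, polyEl, Option.some.injEq, Prod.mk.injEq] at this
        exact this.1
      rw [← ha1]
      exact ha
    · push_neg at hs1
      have := core g hchain gc hg (U.map A1) hs1 (g 1) hGE1 hone
      have h10 : (1 : PolyMon ι) = 0 := ginj this
      exact absurd h10 (by simp [one_def, polyEl])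
  -- second components
  have hr2 : Filter.Tendsto (fun x : PolyMon ι => (g x)⁻¹ * g x) (U : Filter (PolyMon ι))
      (𝓝 (g 1)) := by
    have := hUle.inv.mul hUle
    rwa [h2] at this
  have heq2 : (fun x : PolyMon ι => (g x)⁻¹ * g x) =ᶠ[(U : Filter (PolyMon ι))]
      (fun x => g (polyEl (A2 x) (A2 x))) := by
    filter_upwards [h0] with x hx
    cases x with
    | none => exact absurd rfl hx
    | some pp =>
      show (g (some pp))⁻¹ * g (some pp) = _
      rw [← g_inv g hg, ← hg]
      have hinv : (some pp : PolyMon ι)⁻¹ = polyEl pp.2 pp.1 := rfl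
      have hmm : (some pp : PolyMon ι) = polyEl pp.1 pp.2 := rfl
      rw [hinv, hmm, mul_inv_self]
      rfl
  have hGE2 : Filter.Tendsto (fun w => g (polyEl w w)) ((U : Filter (PolyMon ι)).map A2)
      (𝓝 (g 1)) :=
    Filter.tendsto_map'_iff.mpr ((Filter.tendsto_congr' heq2).mp hr2)
  have hA2one : {x : PolyMon ι | A2 x = 1} ∈ U := by
    by_cases hs2 : ∃ a, {a} ∈ U.map A2
    · obtain ⟨a, ha⟩ := hs2
      have hlim := lim_of_singleton ((U : Filter (PolyMon ι)).map A2)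
        (fun w => g (polyEl w w)) hGE2 ha
      have : polyEl a a = 1 := ginj hlim.symm
      have ha1 : a = 1 := by
        simp only [one_def, polyEl, Option.some.injEq, Prod.mk.injEq] at this
        exact this.1
      rw [← ha1]
      exact ha
    · push_neg at hs2
      have := core g hchain gc hg (U.map A2) hs2 (g 1) hGE2 hone
      have h10 : (1 : PolyMon ι) = 0 := ginj this
      exact absurd h10 (by simp [one_def, polyEl])
  -- combine: U concentrates on {1}
  apply hsing (1 : PolyMon ι)
  refine Filter.mem_of_superset
    (Filter.inter_mem (Filter.inter_mem hA1one hA2one) h0) ?_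
  rintro x ⟨⟨hx1, hx2⟩, hx0⟩
  cases x with
  | none => exact absurd rfl hx0
  | some pp =>
    have hp1 : pp.1 = 1 := hx1
    have hp2 : pp.2 = 1 := hx2
    have hpp : pp = (1, 1) := Prod.ext hp1 hp2
    rw [hpp]
    rfl

theorem mainClosed [Nontrivial ι]
    (hchain : ∀ U : Set (PolyMon ι), IsOpen U → (0 : PolyMon ι) ∈ U →
      ∀ L : Set (PolyMon ι), IsMaxChainIdem L → (U ∩ L).Infinite)
    (gc : Continuous g) (hg : ∀ x y : PolyMon ι, g (x * y) = g x * g y) :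
    IsClosed (Set.range g) := by
  by_cases ginj : Function.Injective g
  case neg =>
    have hconst := const_of_not_injective g hg ginj
    have hr : Set.range g = {g 0} := by
      apply subset_antisymm
      · rintro - ⟨x, rfl⟩
        exact hconst x
      · rintro - rfl
        exact ⟨0, rfl⟩
    rw [hr]
    exact isClosed_singleton
  case pos =>
  refine isClosed_of_closure_subset (fun y hy => ?_)
  -- helper: multiplication by elements of the range preserves the closure
  have hclmul_left : ∀ (x : PolyMon ι) (s : T), s ∈ closure (Set.range g) →
      g x * s ∈ closure (Set.range g) := by
    intro x s hs
    have hmap := image_closure_subset_closure_image (s := Set.range g)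
      (f := fun s : T => g x * s) (continuous_const.mul continuous_id)
    have hsub : (fun s : T => g x * s) '' Set.range g ⊆ Set.range g := by
      rintro - ⟨-, ⟨z, rfl⟩, rfl⟩
      exact ⟨x * z, hg x z⟩
    exact closure_mono hsub (hmap ⟨s, hs, rfl⟩)
  have hclmul_right : ∀ (x : PolyMon ι) (s : T), s ∈ closure (Set.range g) →
      s * g x ∈ closure (Set.range g) := by
    intro x s hs
    have hmap := image_closure_subset_closure_image (s := Set.range g)
      (f := fun s : T => s * g x) (continuous_id.mul continuous_const)
    have hsub : (fun s : T => s * g x) '' Set.range g ⊆ Set.range g := by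
      rintro - ⟨-, ⟨z, rfl⟩, rfl⟩
      exact ⟨z * x, hg z x⟩
    exact closure_mono hsub (hmap ⟨s, hs, rfl⟩)
  -- e = y y⁻¹ and f = y⁻¹ y lie in the closure of the image of the idempotents
  have hecl : y * y⁻¹ ∈ closure (g '' idemE ι) := by
    have hmap := image_closure_subset_closure_image (s := Set.range g)
      (f := fun s : T => s * s⁻¹) (continuous_id.mul continuous_inv)
    have hsub : (fun s : T => s * s⁻¹) '' Set.range g ⊆ g '' idemE ι := by
      rintro - ⟨-, ⟨x, rfl⟩, rfl⟩
      refine ⟨x * x⁻¹, ?_, ?_⟩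
      · cases x with
        | none => exact rfl
        | some pp =>
          have hx : (some pp : PolyMon ι) * (some pp)⁻¹ = polyEl pp.1 pp.1 :=
            mul_inv_self pp.1 pp.2
          rw [hx]
          exact idem_iff.mpr (Or.inr ⟨pp.1, rfl⟩)
      · rw [hg, g_inv g hg]
    exact closure_mono hsub (hmap ⟨y, hy, rfl⟩)
  have hfcl : y⁻¹ * y ∈ closure (g '' idemE ι) := by
    have hmap := image_closure_subset_closure_image (s := Set.range g)
      (f := fun s : T => s⁻¹ * s) (continuous_inv.mul continuous_id)
    have hsub : (fun s : T => s⁻¹ * s) '' Set.range g ⊆ g '' idemE ι := by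
      rintro - ⟨-, ⟨x, rfl⟩, rfl⟩
      refine ⟨x⁻¹ * x, ?_, ?_⟩
      · cases x with
        | none => exact rfl
        | some pp =>
          have hx : (some pp : PolyMon ι)⁻¹ * (some pp) = polyEl pp.2 pp.2 :=
            mul_inv_self pp.2 pp.1
          rw [hx]
          exact idem_iff.mpr (Or.inr ⟨pp.2, rfl⟩)
      · rw [hg, g_inv g hg]
    exact closure_mono hsub (hmap ⟨y, hy, rfl⟩)
  obtain ⟨ε, hεE, hεeq⟩ := claim1 g hchain gc hg ginj _ hecl
  obtain ⟨φ, hφE, hφeq⟩ := claim1 g hchain gc hg ginj _ hfcl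
  have he_y : (y * y⁻¹) * y = y := (creg g hg y hy).1
  have hy_f : y * (y⁻¹ * y) = y := by rw [← mul_assoc]; exact he_y
  rcases idem_iff.mp hεE with rfl | ⟨a, rfl⟩
  · -- ε = 0 : y = g 0
    have hz : g 0 * y = g 0 := (zmul g hg gc y hy).2
    rw [hεeq] at hz
    rw [he_y] at hz
    exact ⟨0, hεeq.trans hz.symm⟩
  rcases idem_iff.mp hφE with rfl | ⟨b, rfl⟩
  · have hz : y * g 0 = g 0 := (zmul g hg gc y hy).1
    rw [hφeq] at hz
    rw [hy_f] at hz
    exact ⟨0, hφeq.trans hz.symm⟩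
  -- main reduction
  set yi := y⁻¹ with hyi
  set p := g (polyEl 1 a) with hp
  set p' := g (polyEl a 1) with hp'
  set q := g (polyEl b 1) with hq
  set q' := g (polyEl 1 b) with hq'
  have haa : g (polyEl a a) = y * yi := hεeq
  have hbb : g (polyEl b b) = yi * y := hφeq
  have hpp' : p * p' = g 1 := by rw [hp, hp', ← hg, mul_match]; rfl
  have hp'p : p' * p = g (polyEl a a) := by rw [hp, hp', ← hg, mul_match]
  have hqq' : q * q' = g (polyEl b b) := by rw [hq, hq', ← hg, mul_match]
  have hq'q : q' * q = g 1 := by rw [hq, hq', ← hg, mul_match]; rfl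
  have hiyi : (yi * y) * yi = yi := (creg g hg y hy).2
  -- left-context rewriting lemmas
  have sL1 : ∀ Z : T, Z * q * q' = Z * yi * y := fun Z => by
    rw [mul_assoc, hqq', hbb, ← mul_assoc]
  have sL2 : ∀ Z : T, Z * p' * p = Z * y * yi := fun Z => by
    rw [mul_assoc, hp'p, haa, ← mul_assoc]
  have sL3 : ∀ Z : T, Z * y * yi * y = Z * y := fun Z => by
    rw [mul_assoc Z y yi, mul_assoc Z (y * yi) y, he_y]
  have sL4 : ∀ Z : T, Z * yi * y * yi = Z * yi := fun Z => by
    rw [mul_assoc Z yi y, mul_assoc Z (yi * y) yi, hiyi]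
  set uu := p * y * q with huu
  set ww := q' * yi * p' with hww
  have huwu : uu * ww * uu = uu := by
    rw [huu, hww]
    simp only [← mul_assoc]
    rw [sL1 (p * y), sL3 p, sL2 (p * y * yi), sL3 p, sL3 p]
  have hwuw : ww * uu * ww = ww := by
    rw [huu, hww]
    simp only [← mul_assoc]
    rw [sL2 (q' * yi), sL4 q', sL1 (q' * yi * y), sL4 q', sL4 q']
  have hwinv : ww = uu⁻¹ := InverseSemigroup.inv_unique uu ww huwu hwuw
  have hpe : p * g (polyEl a a) = p := by
    rw [hp, ← hg, mul_right_div (b₁ := (1 : FreeMonoid ι)) (one_mul a).symm, one_mul]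
  have hq'e : q' * g (polyEl b b) = q' := by
    rw [hq', ← hg, mul_right_div (b₁ := (1 : FreeMonoid ι)) (one_mul b).symm, one_mul]
  have huw : uu * ww = g 1 := by
    rw [huu, hww]
    simp only [← mul_assoc]
    rw [sL1 (p * y), sL3 p]
    -- p * y * yi * p' = p * (y * yi) * p' = p * g(aa) * p' = p * p'
    rw [mul_assoc p y yi, ← haa, hpe, hpp']
  have hwu : ww * uu = g 1 := by
    rw [huu, hww]
    simp only [← mul_assoc]
    rw [sL2 (q' * yi), sL4 q']
    rw [mul_assoc q' yi y, ← hbb, hq'e, hq'q]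
  have hucl : uu ∈ closure (Set.range g) := by
    rw [huu, mul_assoc]
    exact hclmul_left _ _ (hclmul_right _ _ hy)
  obtain ⟨m, hm⟩ := unitcase g hchain gc hg ginj uu hucl
    (by rw [← hwinv]; exact huw) (by rw [← hwinv]; exact hwu)
  -- recover y
  have hyrec : p' * uu * q' = y := by
    rw [huu]
    simp only [← mul_assoc]
    rw [hp'p, haa]
    -- (y * yi) * y * q * q' = y * q * q' = y * yi * y = y
    rw [he_y, sL1 y, mul_assoc y yi y]
    exact hy_f
  refine ⟨polyEl a 1 * m * polyEl 1 b, ?_⟩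
  rw [hg, hg, hm, ← hp', ← hq', hyrec]

end Top

end MoreAux
end PolyAux

/-- If `τ` is a Hausdorff inverse semigroup topology on the λ-polycyclic monoid `P_λ`
(λ ≥ 2) such that every neighbourhood of `0` meets every maximal chain of the semilattice
`E(P_λ)` in an infinite set, then `(P_λ, τ)` is absolutely H-closed in the class of
topological inverse semigroups: the image of every continuous homomorphism into a
topological inverse semigroup is H-closed in that class. -/
theorem statement_9 {ι : Type u} [Nontrivial ι] [TopologicalSpace (PolyMon ι)]
    [T2Space (PolyMon ι)] [ContinuousMul (PolyMon ι)] [ContinuousInv (PolyMon ι)]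
    (hchain : ∀ U : Set (PolyMon ι), IsOpen U → (0 : PolyMon ι) ∈ U →
      ∀ L : Set (PolyMon ι), IsMaxChainIdem L → (U ∩ L).Infinite) :
    ∀ (T : Type v) [InverseSemigroup T] [TopologicalSpace T] [T2Space T]
      [ContinuousMul T] [ContinuousInv T] (h : PolyMon ι → T),
      Continuous h → (∀ x y : PolyMon ι, h (x * y) = h x * h y) →
      IsHClosedTISSet.{v, w} (Set.range h) := by
  intro T _ _ _ _ _ h hc hhom
  intro T' _ _ _ _ _ f finj find fmul
  set g : PolyMon ι → T' := fun x => f ⟨h x, Set.mem_range_self x⟩ with hgdef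
  have gc : Continuous g := find.continuous.comp (hc.subtype_mk _)
  have ghom : ∀ x y : PolyMon ι, g (x * y) = g x * g y := by
    intro x y
    have hmem : (h x) * (h y) ∈ Set.range h := by rw [← hhom]; exact Set.mem_range_self _
    have hf := fmul ⟨h x, Set.mem_range_self x⟩ ⟨h y, Set.mem_range_self y⟩ hmem
    have hsub : (⟨h (x * y), Set.mem_range_self _⟩ : Set.range h)
        = ⟨h x * h y, hmem⟩ := Subtype.ext (hhom x y)
    show f ⟨h (x * y), Set.mem_range_self _⟩ = _
    rw [hsub]
    exact hf
  have hrange : Set.range g = Set.range f := by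
    apply subset_antisymm
    · rintro - ⟨x, rfl⟩
      exact ⟨⟨h x, Set.mem_range_self x⟩, rfl⟩
    · rintro - ⟨⟨t0, x, rfl⟩, rfl⟩
      exact ⟨x, rfl⟩
  rw [← hrange]
  exact PolyAux.mainClosed g hchain gc ghom
end

section
/- Let λ ≥ 2 be a cardinal. The λ-polycyclic monoid P_λ endowed with the topology τ_mi is absolutely H-closed in the class of topological inverse semigroups: for every continuous homomorphism h from (P_λ, τ_mi) into a topological inverse semigroup T, the image h(P_λ) is a closed subset of every topological inverse semigroup containing it as an inverse subsemigroup with the subspace topology. -/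
universe u v

/-- The basic neighbourhood `U_A(0) = {a⁻¹b : a, b ∈ M_λ \ A} ∪ {0}` of zero. -/
def U0 {ι : Type u} (A : Set (FreeMonoid ι)) : Set (PolyMon ι) :=
  {x | x = 0 ∨ ∃ a b : FreeMonoid ι, a ∉ A ∧ b ∉ A ∧ x = polyEl a b}

/-- The topology `τ_mi` on the polycyclic monoid: all nonzero elements are isolated and
the sets `U_A(0)`, for `A` a finite subset of the free monoid, form a base at `0`. -/
def tauMi (ι : Type u) : TopologicalSpace (PolyMon ι) :=
  TopologicalSpace.generateFrom
    ({s | ∃ x : PolyMon ι, x ≠ 0 ∧ s = {x}} ∪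
     {s | ∃ A : Set (FreeMonoid ι), A.Finite ∧ s = U0 A})

namespace PM

variable {ι : Type u}

lemma zero_def : (0 : PolyMon ι) = none := rfl

lemma polyEl_ne_zero (a b : FreeMonoid ι) : polyEl a b ≠ 0 := fun h => Option.some_ne_none _ h

lemma polyEl_inj {a b c d : FreeMonoid ι} (h : polyEl a b = polyEl c d) : a = c ∧ b = d := by
  simpa [polyEl, Prod.ext_iff] using h

lemma zero_mul (y : PolyMon ι) : (0 : PolyMon ι) * y = 0 := rfl

lemma mul_zero (x : PolyMon ι) : x * (0 : PolyMon ι) = 0 := by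
  show polyMul x 0 = 0
  cases x <;> rfl

lemma inv_zero : (0 : PolyMon ι)⁻¹ = 0 := rfl

lemma inv_polyEl (a b : FreeMonoid ι) : (polyEl a b)⁻¹ = polyEl b a := rfl

open Classical in
lemma polyMul_some (p q : FreeMonoid ι × FreeMonoid ι) :
    polyMul (some p) (some q) =
      if h : ∃ c₁ : FreeMonoid ι, q.1 = c₁ * p.2 then some (Classical.choose h * p.1, q.2)
      else if h' : ∃ b₁ : FreeMonoid ι, p.2 = b₁ * q.1 then some (p.1, Classical.choose h' * q.2)
      else none := rfl

lemma mul_comp₁ (a b e d : FreeMonoid ι) :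
    polyEl a b * polyEl (e * b) d = polyEl (e * a) d := by
  show polyMul (some (a, b)) (some (e * b, d)) = _
  rw [polyMul_some]
  have h : ∃ c₁ : FreeMonoid ι, ((e * b, d) : FreeMonoid ι × FreeMonoid ι).1 = c₁ * ((a, b) : FreeMonoid ι × FreeMonoid ι).2 := ⟨e, rfl⟩
  rw [dif_pos h]
  have : Classical.choose h = e := (mul_right_cancel (Classical.choose_spec h)).symm
  rw [this]
  rfl

lemma mul_comp₁' (a b d : FreeMonoid ι) : polyEl a b * polyEl b d = polyEl a d := by
  simpa using mul_comp₁ a b 1 d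

lemma mul_comp₂ (a c d e : FreeMonoid ι) :
    polyEl a (e * c) * polyEl c d = polyEl a (e * d) := by
  by_cases he : e = 1
  · subst he; simpa using mul_comp₁' a c d
  · show polyMul (some (a, e * c)) (some (c, d)) = _
    rw [polyMul_some]
    have hno : ¬ ∃ c₁ : FreeMonoid ι, ((c, d) : FreeMonoid ι × FreeMonoid ι).1 = c₁ * ((a, e * c) : FreeMonoid ι × FreeMonoid ι).2 := by
      rintro ⟨c₁, hc⟩
      have h1 : c.length = c₁.length + (e.length + c.length) := by
        simpa [FreeMonoid.length_mul] using congrArg FreeMonoid.length hc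
      exact he (FreeMonoid.length_eq_zero.mp (by omega))
    rw [dif_neg hno]
    have h' : ∃ b₁ : FreeMonoid ι, ((a, e * c) : FreeMonoid ι × FreeMonoid ι).2 = b₁ * ((c, d) : FreeMonoid ι × FreeMonoid ι).1 := ⟨e, rfl⟩
    rw [dif_pos h']
    have : Classical.choose h' = e := (mul_right_cancel (Classical.choose_spec h')).symm
    rw [this]
    rfl

lemma mul_incomp (a b c d : FreeMonoid ι) (h1 : ¬ ∃ e : FreeMonoid ι, c = e * b)
    (h2 : ¬ ∃ e : FreeMonoid ι, b = e * c) : polyEl a b * polyEl c d = 0 := by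
  show polyMul (some (a, b)) (some (c, d)) = _
  rw [polyMul_some, dif_neg, dif_neg]
  · rfl
  · exact h2
  · exact h1

lemma mul_inv_self (a b : FreeMonoid ι) : polyEl a b * (polyEl a b)⁻¹ = polyEl a a := by
  rw [inv_polyEl]; exact mul_comp₁' a b a

lemma pm1 (y : PolyMon ι) : y * y⁻¹ * y = y := by
  cases y with
  | none => rfl
  | some p =>
    obtain ⟨a, b⟩ := p
    show polyEl a b * (polyEl a b)⁻¹ * polyEl a b = polyEl a b
    rw [mul_inv_self, mul_comp₁']

lemma pm2 (y : PolyMon ι) : y⁻¹ * y * y⁻¹ = y⁻¹ := by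
  cases y with
  | none => rfl
  | some p =>
    obtain ⟨a, b⟩ := p
    show (polyEl a b)⁻¹ * polyEl a b * (polyEl a b)⁻¹ = (polyEl a b)⁻¹
    rw [inv_polyEl, mul_comp₁', mul_comp₁']

end PM

namespace PM
variable {ι : Type u}

lemma zero_mem_U0 (A : Set (FreeMonoid ι)) : (0 : PolyMon ι) ∈ U0 A := Or.inl rfl

lemma U0_anti {A B : Set (FreeMonoid ι)} (h : A ⊆ B) : U0 B ⊆ U0 A := by
  rintro x (rfl | ⟨a, b, ha, hb, rfl⟩)
  · exact Or.inl rfl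
  · exact Or.inr ⟨a, b, fun h' => ha (h h'), fun h' => hb (h h'), rfl⟩

lemma exists_U0_subset {O : Set (PolyMon ι)} (hO : @IsOpen _ (tauMi ι) O)
    (h0 : (0 : PolyMon ι) ∈ O) : ∃ A : Set (FreeMonoid ι), A.Finite ∧ U0 A ⊆ O := by
  have hO' : TopologicalSpace.GenerateOpen
      ({s | ∃ x : PolyMon ι, x ≠ 0 ∧ s = {x}} ∪
       {s | ∃ A : Set (FreeMonoid ι), A.Finite ∧ s = U0 A}) O := hO
  clear hO
  induction hO' with
  | basic s hs =>
    rcases hs with ⟨x, hx, rfl⟩ | ⟨A, hA, rfl⟩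
    · exact absurd h0.symm hx
    · exact ⟨A, hA, subset_rfl⟩
  | univ => exact ⟨∅, Set.finite_empty, Set.subset_univ _⟩
  | inter s t hs ht ihs iht =>
    obtain ⟨A, hA, hAs⟩ := ihs h0.1
    obtain ⟨B, hB, hBt⟩ := iht h0.2
    exact ⟨A ∪ B, hA.union hB,
      fun x hx => ⟨hAs (U0_anti Set.subset_union_left hx), hBt (U0_anti Set.subset_union_right hx)⟩⟩
  | sUnion S hS ih =>
    obtain ⟨s, hsS, h0s⟩ := h0
    obtain ⟨A, hA, hAs⟩ := ih s hsS h0s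
    exact ⟨A, hA, fun x hx => ⟨s, hsS, hAs hx⟩⟩

lemma isCompact_diag (C : Set (PolyMon ι)) (h0 : (0 : PolyMon ι) ∈ C)
    (hC : ∀ x ∈ C, x = 0 ∨ ∃ a : FreeMonoid ι, x = polyEl a a) :
    @IsCompact _ (tauMi ι) C := by
  letI : TopologicalSpace (PolyMon ι) := tauMi ι
  classical
  apply isCompact_of_finite_subcover
  intro idx U hUopen hcover
  obtain ⟨i0, hi0⟩ : ∃ i, (0 : PolyMon ι) ∈ U i := by
    simpa using hcover h0
  obtain ⟨A, hA, hAsub⟩ := exists_U0_subset (hUopen i0) hi0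
  have hF : (C \ U0 A).Finite := by
    apply Set.Finite.subset (hA.image (fun a => polyEl a a))
    rintro x ⟨hxC, hxU⟩
    rcases hC x hxC with rfl | ⟨a, rfl⟩
    · exact absurd (zero_mem_U0 A) hxU
    · refine ⟨a, ?_, rfl⟩
      by_contra ha
      exact hxU (Or.inr ⟨a, a, ha, ha, rfl⟩)
  have _ : Nonempty idx := ⟨i0⟩
  choose! φ hφ using fun x (hx : x ∈ C) => by simpa using hcover hx
  refine ⟨insert i0 (hF.toFinset.image fun x => if hx : x ∈ C then φ x else i0), fun x hx => ?_⟩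
  by_cases hxU : x ∈ U0 A
  · exact Set.mem_biUnion (Finset.mem_insert_self _ _) (hAsub hxU)
  · have hxF : x ∈ C \ U0 A := ⟨hx, hxU⟩
    refine Set.mem_biUnion (Finset.mem_insert_of_mem ?_) (show x ∈ U (if hx' : x ∈ C then φ x else i0) from ?_)
    · exact Finset.mem_image_of_mem _ (hF.mem_toFinset.mpr hxF)
    · rw [dif_pos hx]
      exact hφ x hx

end PM

namespace PM

variable {ι : Type u} {T : Type v} [InverseSemigroup T]
variable {g : PolyMon ι → T}

lemma inv_mul_eq (a b : FreeMonoid ι) : (polyEl a b)⁻¹ * polyEl a b = polyEl b b := by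
  rw [inv_polyEl]; exact mul_comp₁' b a b

lemma self_mul_inv_mem (y : PolyMon ι) :
    y * y⁻¹ = 0 ∨ ∃ a : FreeMonoid ι, y * y⁻¹ = polyEl a a := by
  cases y with
  | none => exact Or.inl rfl
  | some p => exact Or.inr ⟨p.1, mul_inv_self p.1 p.2⟩

lemma inv_mul_self_mem (y : PolyMon ι) :
    y⁻¹ * y = 0 ∨ ∃ a : FreeMonoid ι, y⁻¹ * y = polyEl a a := by
  cases y with
  | none => exact Or.inl rfl
  | some p => exact Or.inr ⟨p.2, inv_mul_eq p.1 p.2⟩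

section Hom
variable (hm : ∀ x y : PolyMon ι, g (x * y) = g x * g y)
include hm

lemma ginv (y : PolyMon ι) : g y⁻¹ = (g y)⁻¹ := by
  refine InverseSemigroup.inv_unique (g y) (g y⁻¹) ?_ ?_
  · rw [← hm, ← hm, pm1]
  · rw [← hm, ← hm, pm2]

lemma collapse {γ : FreeMonoid ι} (hγ : g (polyEl γ γ) = g 0) :
    ∀ y : PolyMon ι, g y = g 0 := by
  intro y
  cases y with
  | none => rfl
  | some p =>
    obtain ⟨u, v⟩ := p
    have h1 : polyEl u (v * γ) * polyEl γ γ = polyEl u (v * γ) := mul_comp₂ u γ γ v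
    have h2 : polyEl u (v * γ) * polyEl γ 1 = polyEl u v := by
      simpa using mul_comp₂ u γ 1 v
    have h3 : g (polyEl u (v * γ)) = g (polyEl u (v * γ)) * g 0 := by
      conv_lhs => rw [← h1, hm, hγ]
    calc g (some (u, v)) = g (polyEl u (v * γ) * polyEl γ 1) := by rw [h2]; rfl
      _ = g (polyEl u (v * γ)) * g (polyEl γ 1) := hm _ _
      _ = (g (polyEl u (v * γ)) * g 0) * g (polyEl γ 1) := by rw [← h3]
      _ = g ((polyEl u (v * γ) * 0) * polyEl γ 1) := by rw [hm, hm]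
      _ = g 0 := by rw [PM.mul_zero, PM.zero_mul]

lemma key {a b : FreeMonoid ι} (h : g (polyEl a b) = g 0) : g (polyEl a a) = g 0 := by
  calc g (polyEl a a) = g (polyEl a b * polyEl b a) := by rw [mul_comp₁']
    _ = g (polyEl a b) * g (polyEl b a) := hm _ _
    _ = g 0 * g (polyEl b a) := by rw [h]
    _ = g (0 * polyEl b a) := (hm _ _).symm
    _ = g 0 := by rw [PM.zero_mul]

lemma idemeq {a b c d : FreeMonoid ι} (h : g (polyEl a b) = g (polyEl c d)) :
    g (polyEl a a) = g (polyEl c c) := by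
  have hba : g (polyEl b a) = g (polyEl d c) := by
    have h1 : g ((polyEl a b)⁻¹) = g ((polyEl c d)⁻¹) := by rw [ginv hm, ginv hm, h]
    simpa [inv_polyEl] using h1
  calc g (polyEl a a) = g (polyEl a b * polyEl b a) := by rw [mul_comp₁']
    _ = g (polyEl a b) * g (polyEl b a) := hm _ _
    _ = g (polyEl c d) * g (polyEl d c) := by rw [h, hba]
    _ = g (polyEl c d * polyEl d c) := (hm _ _).symm
    _ = g (polyEl c c) := by rw [mul_comp₁']

lemma oneSide [Nontrivial ι] {α β e : FreeMonoid ι} (he : α = e * β) (hne : e ≠ 1)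
    (heq : g (polyEl α α) = g (polyEl β β)) :
    ∃ γ : FreeMonoid ι, g (polyEl γ γ) = g 0 := by
  obtain ⟨L, p, hL⟩ : ∃ L p, FreeMonoid.toList e = L ++ [p] := by
    rcases List.eq_nil_or_concat (FreeMonoid.toList e) with h | ⟨L, p, h⟩
    · exact absurd (FreeMonoid.toList.injective (h.trans rfl)) hne
    · exact ⟨L, p, by simpa [List.concat_eq_append] using h⟩
  obtain ⟨q, hq⟩ := exists_ne p
  refine ⟨FreeMonoid.of q * β, ?_⟩
  have h1 : polyEl (FreeMonoid.of q * β) (FreeMonoid.of q * β) * polyEl β β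
      = polyEl (FreeMonoid.of q * β) (FreeMonoid.of q * β) :=
    mul_comp₂ (FreeMonoid.of q * β) β β (FreeMonoid.of q)
  have h2 : polyEl (FreeMonoid.of q * β) (FreeMonoid.of q * β) * polyEl α α = 0 := by
    apply mul_incomp
    · rintro ⟨x, hx⟩
      have hx' : e * β = (x * FreeMonoid.of q) * β := by rw [mul_assoc, ← hx, he]
      have he2 : e = x * FreeMonoid.of q := mul_right_cancel hx'
      have : (L ++ [p]).getLast? = (FreeMonoid.toList x ++ [q]).getLast? := by
        rw [← hL, ← FreeMonoid.toList_of (x := q)]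
        rw [he2]
        rfl
      rw [List.getLast?_concat, List.getLast?_concat] at this
      exact hq (Option.some.inj this).symm
    · rintro ⟨x, hx⟩
      have hx' : FreeMonoid.of q * β = (x * e) * β := by rw [mul_assoc, ← he, hx]
      have hqe : FreeMonoid.of q = x * e := mul_right_cancel hx'
      have hlen : (1 : ℕ) = x.length + e.length := by
        simpa [FreeMonoid.length_mul, FreeMonoid.length_of] using congrArg FreeMonoid.length hqe
      have hepos : e.length ≠ 0 := fun h => hne (FreeMonoid.length_eq_zero.mp h)
      have hx1 : x = 1 := FreeMonoid.length_eq_zero.mp (by omega)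
      rw [hx1, one_mul] at hqe
      have : ([q] : List ι).getLast? = (L ++ [p]).getLast? := by
        rw [← hL, ← hqe, FreeMonoid.toList_of]
      rw [List.getLast?_concat] at this
      have : ([] ++ [q] : List ι).getLast? = some p := by simpa using this
      rw [List.getLast?_concat] at this
      exact hq (Option.some.inj this)
  calc g (polyEl (FreeMonoid.of q * β) (FreeMonoid.of q * β))
      = g (polyEl (FreeMonoid.of q * β) (FreeMonoid.of q * β)) * g (polyEl β β) := by
        conv_lhs => rw [← h1, hm]
    _ = g (polyEl (FreeMonoid.of q * β) (FreeMonoid.of q * β)) * g (polyEl α α) := by rw [heq]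
    _ = g (polyEl (FreeMonoid.of q * β) (FreeMonoid.of q * β) * polyEl α α) := (hm _ _).symm
    _ = g 0 := by rw [h2]

lemma bcase [Nontrivial ι] {α β : FreeMonoid ι} (hne : α ≠ β)
    (heq : g (polyEl α α) = g (polyEl β β)) :
    ∃ γ : FreeMonoid ι, g (polyEl γ γ) = g 0 := by
  by_cases h1 : ∃ e : FreeMonoid ι, α = e * β
  · obtain ⟨e, he⟩ := h1
    exact oneSide hm he (fun h => hne (by rw [he, h, one_mul])) heq
  · by_cases h2 : ∃ e : FreeMonoid ι, β = e * α
    · obtain ⟨e, he⟩ := h2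
      exact oneSide hm he (fun h => hne.symm (by rw [he, h, one_mul])) heq.symm
    · refine ⟨α, ?_⟩
      have h3 : polyEl β β * polyEl α α = 0 := mul_incomp β β α α h1 h2
      calc g (polyEl α α) = g (polyEl α α * polyEl α α) := by rw [mul_comp₁']
        _ = g (polyEl α α) * g (polyEl α α) := hm _ _
        _ = g (polyEl β β) * g (polyEl α α) := by rw [heq]
        _ = g (polyEl β β * polyEl α α) := (hm _ _).symm
        _ = g 0 := by rw [h3]

lemma noninj_collapse [Nontrivial ι] {s t : PolyMon ι} (hst : g s = g t) (hne : s ≠ t) :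
    ∀ y : PolyMon ι, g y = g 0 := by
  suffices hex : ∃ γ : FreeMonoid ι, g (polyEl γ γ) = g 0 by
    obtain ⟨γ, hγ⟩ := hex
    exact collapse hm hγ
  cases s with
  | none =>
    cases t with
    | none => exact absurd rfl hne
    | some p =>
      exact ⟨p.1, key hm (show g (polyEl p.1 p.2) = g 0 from hst.symm)⟩
  | some p =>
    cases t with
    | none => exact ⟨p.1, key hm (show g (polyEl p.1 p.2) = g 0 from hst)⟩
    | some r =>
      obtain ⟨a, b⟩ := p
      obtain ⟨c, d⟩ := r
      have hst' : g (polyEl a b) = g (polyEl c d) := hst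
      by_cases hac : a = c
      · subst hac
        have hbd : b ≠ d := fun h => hne (by rw [h])
        have hba : g (polyEl b a) = g (polyEl d a) := by
          have h1 : g ((polyEl a b)⁻¹) = g ((polyEl a d)⁻¹) := by rw [ginv hm, ginv hm, hst']
          simpa [inv_polyEl] using h1
        exact bcase hm hbd (idemeq hm hba)
      · exact bcase hm hac (idemeq hm hst')

end Hom
end PM

namespace PM

theorem polyRangeClosed {ι : Type u} [Nontrivial ι] {T : Type v} [InverseSemigroup T]
    [TopologicalSpace T] [T2Space T] [ContinuousMul T] [ContinuousInv T]
    (g : PolyMon ι → T) (hc : @Continuous _ _ (tauMi ι) _ g)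
    (hm : ∀ x y : PolyMon ι, g (x * y) = g x * g y) :
    IsClosed (Set.range g) := by
  letI : TopologicalSpace (PolyMon ι) := tauMi ι
  by_cases hinj : Function.Injective g
  case neg =>
    -- non-injective: the range is the singleton {g 0}
    rw [Function.Injective] at hinj
    push_neg at hinj
    obtain ⟨s, t, hst, hne⟩ := hinj
    have hall : ∀ y : PolyMon ι, g y = g 0 := noninj_collapse hm hst hne
    have : Set.range g = {g 0} := by
      ext w
      constructor
      · rintro ⟨y, rfl⟩; exact hall y
      · rintro rfl; exact ⟨0, rfl⟩
    rw [this]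
    exact isClosed_singleton
  case pos =>
  set S : Set T := Set.range g with hS
  set Eset : Set (PolyMon ι) := {x | x = 0 ∨ ∃ a : FreeMonoid ι, x = polyEl a a} with hEset
  have hφ : Continuous fun t : T => t * t⁻¹ := continuous_id.mul continuous_inv
  have hψ : Continuous fun t : T => t⁻¹ * t := continuous_inv.mul continuous_id
  -- the closure absorbs multiplication by the zero
  have hz1 : ∀ x ∈ closure S, g 0 * x = g 0 := by
    intro x hx
    have hclosed : IsClosed {t : T | g 0 * t = g 0} :=
      isClosed_eq (continuous_const.mul continuous_id) continuous_const
    have hsub : S ⊆ {t : T | g 0 * t = g 0} := by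
      rintro _ ⟨y, rfl⟩
      show g 0 * g y = g 0
      rw [← hm, PM.zero_mul]
    exact hclosed.closure_subset_iff.mpr hsub hx
  have hz2 : ∀ x ∈ closure S, x * g 0 = g 0 := by
    intro x hx
    have hclosed : IsClosed {t : T | t * g 0 = g 0} :=
      isClosed_eq (continuous_id.mul continuous_const) continuous_const
    have hsub : S ⊆ {t : T | t * g 0 = g 0} := by
      rintro _ ⟨y, rfl⟩
      show g y * g 0 = g 0
      rw [← hm, PM.mul_zero]
    exact hclosed.closure_subset_iff.mpr hsub hx
  -- images of "diagonal" compact sets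
  have hdiag : ∀ (D : Set (PolyMon ι)), (0 : PolyMon ι) ∈ D → D ⊆ Eset →
      IsCompact (g '' D) := by
    intro D h0 hD
    exact (isCompact_diag D h0 (fun x hx => hD hx)).image hc
  have hmem1 : ∀ x ∈ closure S, x * x⁻¹ ∈ g '' Eset := by
    intro x hx
    have himg : (fun t : T => t * t⁻¹) '' S ⊆ g '' Eset := by
      rintro _ ⟨_, ⟨y, rfl⟩, rfl⟩
      refine ⟨y * y⁻¹, ?_, ?_⟩
      · exact self_mul_inv_mem y
      · show g (y * y⁻¹) = g y * (g y)⁻¹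
        rw [hm, ginv hm]
    have hcpt : IsCompact (g '' Eset) := hdiag Eset (Or.inl rfl) subset_rfl
    have h1 : x * x⁻¹ ∈ closure ((fun t : T => t * t⁻¹) '' S) :=
      image_closure_subset_closure_image hφ ⟨x, hx, rfl⟩
    have h2 : closure ((fun t : T => t * t⁻¹) '' S) ⊆ g '' Eset :=
      hcpt.isClosed.closure_subset_iff.mpr himg
    exact h2 h1
  have hmem2 : ∀ x ∈ closure S, x⁻¹ * x ∈ g '' Eset := by
    intro x hx
    have himg : (fun t : T => t⁻¹ * t) '' S ⊆ g '' Eset := by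
      rintro _ ⟨_, ⟨y, rfl⟩, rfl⟩
      refine ⟨y⁻¹ * y, ?_, ?_⟩
      · exact inv_mul_self_mem y
      · show g (y⁻¹ * y) = (g y)⁻¹ * g y
        rw [hm, ginv hm]
    have hcpt : IsCompact (g '' Eset) := hdiag Eset (Or.inl rfl) subset_rfl
    have h1 : x⁻¹ * x ∈ closure ((fun t : T => t⁻¹ * t) '' S) :=
      image_closure_subset_closure_image hψ ⟨x, hx, rfl⟩
    have h2 : closure ((fun t : T => t⁻¹ * t) '' S) ⊆ g '' Eset :=
      hcpt.isClosed.closure_subset_iff.mpr himg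
    exact h2 h1
  apply isClosed_of_closure_subset
  intro x hx
  obtain ⟨ε, hεE, hεx⟩ := hmem1 x hx
  obtain ⟨δ, hδE, hδx⟩ := hmem2 x hx
  rcases hεE with hε0 | ⟨c, hεc⟩
  · -- x x⁻¹ = g 0, hence x = g 0
    refine ⟨0, ?_⟩
    calc g 0 = g 0 * x := (hz1 x hx).symm
      _ = g ε * x := by rw [hε0]
      _ = (x * x⁻¹) * x := by rw [hεx]
      _ = x := InverseSemigroup.mul_inv_mul x
  rcases hδE with hδ0 | ⟨d, hδd⟩
  · refine ⟨0, ?_⟩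
    calc g 0 = x * g 0 := (hz2 x hx).symm
      _ = x * g δ := by rw [hδ0]
      _ = x * (x⁻¹ * x) := by rw [hδx]
      _ = x := by rw [← mul_assoc, InverseSemigroup.mul_inv_mul]
  subst hεc hδd
  -- the compact sets avoiding the two idempotents
  have h0K1 : (0 : PolyMon ι) ∈ Eset \ {polyEl c c} :=
    ⟨Or.inl rfl, fun h => polyEl_ne_zero c c (Set.mem_singleton_iff.mp h).symm⟩
  have h0K2 : (0 : PolyMon ι) ∈ Eset \ {polyEl d d} :=
    ⟨Or.inl rfl, fun h => polyEl_ne_zero d d (Set.mem_singleton_iff.mp h).symm⟩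
  have hK1 : IsCompact (g '' (Eset \ {polyEl c c})) := hdiag _ h0K1 Set.diff_subset
  have hK2 : IsCompact (g '' (Eset \ {polyEl d d})) := hdiag _ h0K2 Set.diff_subset
  have hxne1 : x * x⁻¹ ∉ g '' (Eset \ {polyEl c c}) := by
    rintro ⟨δ', ⟨hδ'E, hδ'ne⟩, hδ'⟩
    exact hδ'ne (Set.mem_singleton_iff.mpr (hinj (hδ'.trans hεx.symm)))
  have hxne2 : x⁻¹ * x ∉ g '' (Eset \ {polyEl d d}) := by
    rintro ⟨δ', ⟨hδ'E, hδ'ne⟩, hδ'⟩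
    exact hδ'ne (Set.mem_singleton_iff.mpr (hinj (hδ'.trans hδx.symm)))
  set V : Set T := (fun t : T => t * t⁻¹) ⁻¹' (g '' (Eset \ {polyEl c c}))ᶜ ∩
      (fun t : T => t⁻¹ * t) ⁻¹' (g '' (Eset \ {polyEl d d}))ᶜ with hV
  have hVopen : IsOpen V :=
    ((hK1.isClosed.isOpen_compl).preimage hφ).inter ((hK2.isClosed.isOpen_compl).preimage hψ)
  have hxV : x ∈ V := ⟨hxne1, hxne2⟩
  have hSV : V ∩ S ⊆ {g (polyEl c d)} := by
    rintro _ ⟨⟨hy1, hy2⟩, ⟨y, rfl⟩⟩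
    have e1 : y * y⁻¹ = polyEl c c := by
      by_contra hne2
      apply hy1
      exact ⟨y * y⁻¹, ⟨self_mul_inv_mem y, hne2⟩,
        by show g (y * y⁻¹) = g y * (g y)⁻¹; rw [hm, ginv hm]⟩
    have e2 : y⁻¹ * y = polyEl d d := by
      by_contra hne2
      apply hy2
      exact ⟨y⁻¹ * y, ⟨inv_mul_self_mem y, hne2⟩,
        by show g (y⁻¹ * y) = (g y)⁻¹ * g y; rw [hm, ginv hm]⟩
    cases y with
    | none => exact absurd (show (0 : PolyMon ι) = polyEl c c from e1) (fun h => polyEl_ne_zero c c h.symm)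
    | some p =>
      obtain ⟨a, b⟩ := p
      have e1' : polyEl a b * (polyEl a b)⁻¹ = polyEl c c := e1
      have e2' : (polyEl a b)⁻¹ * polyEl a b = polyEl d d := e2
      obtain ⟨hac, -⟩ := polyEl_inj ((mul_inv_self a b).symm.trans e1')
      obtain ⟨hbd, -⟩ := polyEl_inj ((inv_mul_eq a b).symm.trans e2')
      subst hac hbd
      rfl
  have hx2 : x ∈ closure (V ∩ S) := hVopen.inter_closure ⟨hxV, hx⟩
  have hx3 : x ∈ ({g (polyEl c d)} : Set T) := by
    have := closure_mono hSV hx2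
    rwa [closure_singleton] at this
  exact ⟨polyEl c d, (Set.mem_singleton_iff.mp hx3).symm⟩

end PM

/-- For λ ≥ 2, the λ-polycyclic monoid `P_λ` with the topology `τ_mi` is absolutely
H-closed in the class of topological inverse semigroups: for every continuous homomorphism
`h` from `(P_λ, τ_mi)` into a topological inverse semigroup `T`, the image `h(P_λ)` is
H-closed in the class of topological inverse semigroups. -/
theorem statement_13 {ι : Type u} [Nontrivial ι] :
    ∀ (T : Type v) [InverseSemigroup T] [TopologicalSpace T] [T2Space T]
      [ContinuousMul T] [ContinuousInv T] (h : PolyMon ι → T),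
      @Continuous (PolyMon ι) T (tauMi ι) _ h →
      (∀ x y : PolyMon ι, h (x * y) = h x * h y) →
      IsHClosedTISSet.{v, w} (Set.range h) := by
  intro T _ _ _ _ _ h hc hhom
  intro T₂ _ _ _ _ _ f hfinj hfind hfm
  letI : TopologicalSpace (PolyMon ι) := tauMi ι
  let g : PolyMon ι → T₂ := fun y => f ⟨h y, Set.mem_range_self y⟩
  have hrange : Set.range f = Set.range g := by
    ext t
    constructor
    · rintro ⟨⟨a, ha⟩, rfl⟩
      obtain ⟨y, hy⟩ := ha
      exact ⟨y, congrArg f (Subtype.ext hy)⟩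
    · rintro ⟨y, rfl⟩
      exact ⟨_, rfl⟩
  rw [hrange]
  apply PM.polyRangeClosed g
  · exact hfind.continuous.comp (Continuous.subtype_mk hc _)
  · intro x y
    have hmem : h x * h y ∈ Set.range h := by
      rw [← hhom]; exact Set.mem_range_self _
    have hkey := hfm ⟨h x, Set.mem_range_self x⟩ ⟨h y, Set.mem_range_self y⟩ hmem
    calc g (x * y) = f ⟨h x * h y, hmem⟩ := congrArg f (Subtype.ext (hhom x y))
      _ = g x * g y := hkey
end
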